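/- arXiv:1003.5677 — 3 statements merged into one kernel-verified Lean document; each statement's English description precedes it below -/
import Mathlib

section
/- Let (K,v) be a spherically complete valued field and f = (f_1,…,f_n) a system of n polynomials in n variables with coefficients in O. If b ∈ Oⁿ satisfies vf(b) > 2v det J_f(b), then there is a unique a ∈ Oⁿ with f(a) = 0 and v(a−b) = vJ_f*(b)f(b) − v det J_f(b) > v det J_f(b). -/
section Ultrametric

variable {Y Y' : Type*} {Γ Γ' : Type*} [LinearOrder Γ] [OrderTop Γ]
  [LinearOrder Γ'] [OrderTop Γ']

/-- The axioms of an ultrametric space with distance values in `Γ` (with top element `∞`). -/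
def IsUltrametric (u : Y → Y → Γ) : Prop :=
  (∀ y z, u y z = ⊤ ↔ y = z) ∧
  (∀ x y z, min (u y x) (u x z) ≤ u y z) ∧
  (∀ y z, u y z = u z y)

/-- The closed ball of radius `α` around `y`. -/
def closedBall (u : Y → Y → Γ) (α : Γ) (y : Y) : Set Y := {z | α ≤ u y z}

/-- `B(x,y)`, the smallest closed ball containing `x` and `y`. -/
def smallBall (u : Y → Y → Γ) (x y : Y) : Set Y := closedBall u (u x y) x

/-- A ball: a union of a nonempty collection of closed balls having a common element. -/
def IsBall (u : Y → Y → Γ) (S : Set Y) : Prop :=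
  ∃ C : Set (Γ × Y), C.Nonempty ∧ (∃ y₀, ∀ p ∈ C, y₀ ∈ closedBall u p.1 p.2) ∧
    S = ⋃ p ∈ C, closedBall u p.1 p.2

/-- Spherical completeness: every nest of balls has nonempty intersection. -/
def SphericallyComplete (u : Y → Y → Γ) : Prop :=
  ∀ N : Set (Set Y), N.Nonempty → (∀ B ∈ N, IsBall u B) →
    IsChain (· ⊆ ·) N → (⋂₀ N).Nonempty

/-- `z'` is an attractor for `f`. -/
def IsAttractor (u : Y → Y → Γ) (u' : Y' → Y' → Γ') (f : Y → Y') (z' : Y') : Prop :=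
  ∀ y : Y, f y ≠ z' → ∃ z : Y,
    u' (f y) z' < u' (f z) z' ∧ f '' smallBall u y z ⊆ smallBall u' (f y) z'

/-- A map is immediate if every element of the target is an attractor for it. -/
def Immediate (u : Y → Y → Γ) (u' : Y' → Y' → Γ') (f : Y → Y') : Prop :=
  ∀ z' : Y', IsAttractor u u' f z'

end Ultrametric

/-- The axioms of a (Krull) valuation on a field, written additively, with
`v a = ⊤` iff `a = 0`. -/
def IsFieldVal {K : Type*} [Field K] {Γ : Type*} [AddCommGroup Γ] [LinearOrder Γ] [IsOrderedAddMonoid Γ]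
    (v : K → WithTop Γ) : Prop :=
  (∀ a, v a = ⊤ ↔ a = 0) ∧ (∀ a b, v (a * b) = v a + v b) ∧
  (∀ a b, min (v a) (v b) ≤ v (a - b))

/-- The minimum valuation on `Kⁿ`. -/
def minVal {K : Type*} [Field K] {Γ : Type*} [AddCommGroup Γ] [LinearOrder Γ] [IsOrderedAddMonoid Γ]
    (v : K → WithTop Γ) {n : ℕ} (x : Fin n → K) : WithTop Γ :=
  Finset.univ.inf fun i => v (x i)

section ValLemmas

variable {K : Type*} [Field K] {Γ : Type*} [AddCommGroup Γ] [LinearOrder Γ] [IsOrderedAddMonoid Γ]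
  {v : K → WithTop Γ} (hv : IsFieldVal v)

namespace NewtonAux
include hv

theorem v0 : v 0 = ⊤ := (hv.1 0).2 rfl

theorem v1 : v 1 = 0 := by
  have h := hv.2.1 1 1
  rw [mul_one] at h
  have h1 : v 1 ≠ ⊤ := fun ht => one_ne_zero ((hv.1 1).1 ht)
  lift v 1 to Γ using h1 with g hg
  rw [← WithTop.coe_add, WithTop.coe_eq_coe] at h
  exact_mod_cast (left_eq_add.1 h)

theorem vneg (a : K) : v (-a) = v a := by
  have hm : v (-1 : K) = 0 := by
    have h := hv.2.1 (-1 : K) (-1)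
    rw [neg_mul_neg, one_mul, v1 hv] at h
    have h1 : v (-1 : K) ≠ ⊤ := fun ht => (by norm_num : (-1 : K) ≠ 0) ((hv.1 _).1 ht)
    lift v (-1 : K) to Γ using h1 with g hg
    rw [← WithTop.coe_add, ← WithTop.coe_zero, WithTop.coe_eq_coe] at h
    have hg0 : g = 0 := by
      have h2 : g + g = 0 := h.symm
      rcases lt_trichotomy g 0 with h3 | h3 | h3
      · exact absurd h2 (ne_of_lt (by simpa using add_lt_add h3 h3))
      · exact h3
      · exact absurd h2 (ne_of_gt (by simpa using add_lt_add h3 h3))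
    simp [hg0]
  calc v (-a) = v ((-1) * a) := by ring_nf
  _ = v (-1 : K) + v a := hv.2.1 _ _
  _ = v a := by rw [hm, zero_add]

theorem vadd (a b : K) : min (v a) (v b) ≤ v (a + b) := by
  have := hv.2.2 a (-b)
  rwa [sub_neg_eq_add, vneg hv] at this

theorem vsub (a b : K) : min (v a) (v b) ≤ v (a - b) := hv.2.2 a b

theorem vsub_comm (a b : K) : v (a - b) = v (b - a) := by
  rw [← neg_sub, vneg hv]

theorem vsum {ι : Type*} (s : Finset ι) (g : ι → K) {c : WithTop Γ}
    (h : ∀ i ∈ s, c ≤ v (g i)) : c ≤ v (∑ i ∈ s, g i) := by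
  classical
  induction s using Finset.induction_on with
  | empty => simp [v0 hv]
  | @insert a s' hx ih =>
    rw [Finset.sum_insert hx]
    refine le_trans (le_min (h a (Finset.mem_insert_self a s'))
      (ih fun i hi => h i (Finset.mem_insert_of_mem hi))) (vadd hv _ _)

theorem vnonneg_add {a b : K} (ha : 0 ≤ v a) (hb : 0 ≤ v b) : 0 ≤ v (a + b) :=
  le_trans (le_min ha hb) (vadd hv a b)

theorem vmul (a b : K) : v (a * b) = v a + v b := hv.2.1 a b

theorem vnonneg_mul {a b : K} (ha : 0 ≤ v a) (hb : 0 ≤ v b) : 0 ≤ v (a * b) := by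
  rw [vmul hv]; exact add_nonneg ha hb

theorem vprod {ι : Type*} (s : Finset ι) (g : ι → K)
    (h : ∀ i ∈ s, 0 ≤ v (g i)) : 0 ≤ v (∏ i ∈ s, g i) := by
  classical
  induction s using Finset.induction_on with
  | empty => simp [v1 hv]
  | @insert a s' hx ih =>
    rw [Finset.prod_insert hx]
    exact vnonneg_mul hv (h a (Finset.mem_insert_self a s'))
      (ih fun i hi => h i (Finset.mem_insert_of_mem hi))

theorem vpow {a : K} (ha : 0 ≤ v a) (k : ℕ) : 0 ≤ v (a ^ k) := by
  induction k with
  | zero => simp [v1 hv]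
  | succ k ih => rw [pow_succ]; exact vnonneg_mul hv ih ha

theorem vnat (k : ℕ) : 0 ≤ v (k : K) := by
  induction k with
  | zero => simp [v0 hv]
  | succ k ih => push_cast; exact vnonneg_add hv ih (le_of_eq (v1 hv).symm)

/-- If `v (a - b) > v b` then `v a = v b`. -/
theorem veq_of_vsub_gt {a b : K} (h : v b < v (a - b)) : v a = v b := by
  have h1 : v b ≤ v a := by
    have := vadd hv (a - b) b
    rw [sub_add_cancel] at this
    exact le_trans (le_min (le_of_lt h) le_rfl) this
  have h2 : v a ≤ v b := by
    have hb := hv.2.2 a (a - b)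
    rw [sub_sub_cancel] at hb
    rcases min_le_iff.1 hb with h' | h'
    · exact h'
    · exact absurd (lt_of_lt_of_le h h') (lt_irrefl _)
  exact le_antisymm h2 h1

/-- If `v b > v a` then `v (a + b) = v a`. -/
theorem vadd_eq {a b : K} (h : v a < v b) : v (a + b) = v a := by
  have : v a < v ((a + b) - a) := by rwa [add_sub_cancel_left]
  exact veq_of_vsub_gt hv this

end NewtonAux
end ValLemmas
set_option linter.unusedSectionVars false
namespace NewtonAux

section UltraLemmas

variable {Y : Type*} {Γ : Type*} [LinearOrder Γ] [OrderTop Γ]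
  {u : Y → Y → Γ} (hu : IsUltrametric u)

theorem mem_closedBall {α : Γ} {y z : Y} : z ∈ closedBall u α y ↔ α ≤ u y z := Iff.rfl

include hu

theorem self_mem_closedBall (α : Γ) (y : Y) : y ∈ closedBall u α y := by
  have : u y y = ⊤ := (hu.1 y y).2 rfl
  simp [mem_closedBall, this]

/-- two closed balls with a common point are comparable -/
theorem closedBall_comparable {α β : Γ} {y z w : Y}
    (hy : w ∈ closedBall u α y) (hz : w ∈ closedBall u β z) :
    closedBall u α y ⊆ closedBall u β z ∨ closedBall u β z ⊆ closedBall u α y := by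
  have key : ∀ {α β : Γ} {y z : Y}, α ≤ β → w ∈ closedBall u α y → w ∈ closedBall u β z →
      closedBall u β z ⊆ closedBall u α y := by
    intro α β y z hαβ hy hz q hq
    rw [mem_closedBall] at *
    have h1 : α ≤ u y w := hy
    have h2 : β ≤ u w q := by
      refine le_trans (le_min ?_ hq) (hu.2.1 z w q)
      rw [hu.2.2]; exact hz
    exact le_trans (le_min h1 (le_trans hαβ h2)) (hu.2.1 w y q)
  rcases le_total α β with h | h
  · exact Or.inr (key h hy hz)
  · exact Or.inl (key h hz hy)

theorem closedBall_isBall (α : Γ) (y : Y) : IsBall u (closedBall u α y) := by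
  refine ⟨{(α, y)}, Set.singleton_nonempty _, ⟨y, ?_⟩, by simp⟩
  rintro p rfl
  exact self_mem_closedBall hu α y

end UltraLemmas

/-- a maximal element of a finite nonempty family of pairwise comparable sets -/
theorem exists_max_of_comparable {ι : Type*} {Y : Type*} (s : Finset ι) (g : ι → Set Y)
    (hcomp : ∀ a ∈ s, ∀ b ∈ s, g a ⊆ g b ∨ g b ⊆ g a) (hne : s.Nonempty) :
    ∃ a ∈ s, ∀ b ∈ s, g b ⊆ g a := by
  classical
  induction s using Finset.induction_on with
  | empty => exact absurd hne (by simp)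
  | @insert a s' ha ih =>
    rcases Finset.eq_empty_or_nonempty s' with rfl | hs'
    · exact ⟨a, by simp, by simp⟩
    · obtain ⟨c, hc, hcmax⟩ := ih (fun x hx y hy => hcomp x (Finset.mem_insert_of_mem hx) y
        (Finset.mem_insert_of_mem hy)) hs'
      rcases hcomp a (Finset.mem_insert_self a s') c (Finset.mem_insert_of_mem hc) with h | h
      · exact ⟨c, Finset.mem_insert_of_mem hc, fun b hb => by
          rcases Finset.mem_insert.1 hb with rfl | hb
          · exact h
          · exact hcmax b hb⟩
      · exact ⟨a, Finset.mem_insert_self a s', fun b hb => by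
          rcases Finset.mem_insert.1 hb with rfl | hb
          · exact le_rfl
          · exact le_trans (hcmax b hb) h⟩

section MinValLemmas

variable {K : Type*} [Field K] {Γ : Type*} [AddCommGroup Γ] [LinearOrder Γ] [IsOrderedAddMonoid Γ]
  {v : K → WithTop Γ} (hv : IsFieldVal v) {n : ℕ}

theorem minVal_le (x : Fin n → K) (i : Fin n) : minVal v x ≤ v (x i) :=
  Finset.inf_le (Finset.mem_univ i)

theorem le_minVal {x : Fin n → K} {c : WithTop Γ} (h : ∀ i, c ≤ v (x i)) :
    c ≤ minVal v x := Finset.le_inf fun i _ => h i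

include hv

theorem minVal_top_iff {x : Fin n → K} : minVal v x = ⊤ ↔ x = 0 := by
  constructor
  · intro h
    funext i
    have : v (x i) = ⊤ := top_le_iff.1 (le_trans (top_le_iff.2 h) (minVal_le x i))
    exact (hv.1 _).1 this
  · rintro rfl
    refine top_le_iff.1 (le_minVal fun i => ?_)
    simp [v0 hv]

theorem minVal_sub_top_iff {x y : Fin n → K} : minVal v (x - y) = ⊤ ↔ x = y := by
  rw [minVal_top_iff hv, sub_eq_zero]

theorem minVal_neg (x : Fin n → K) : minVal v (-x) = minVal v x := by
  unfold minVal
  congr 1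
  funext i
  exact vneg hv (x i)

theorem minVal_sub_comm (x y : Fin n → K) : minVal v (x - y) = minVal v (y - x) := by
  rw [← neg_sub, minVal_neg hv]

theorem minVal_add (x y : Fin n → K) :
    min (minVal v x) (minVal v y) ≤ minVal v (x + y) :=
  le_minVal fun i => le_trans (min_le_min (minVal_le x i) (minVal_le y i)) (vadd hv _ _)

theorem minVal_sub (x y : Fin n → K) :
    min (minVal v x) (minVal v y) ≤ minVal v (x - y) :=
  le_minVal fun i => le_trans (min_le_min (minVal_le x i) (minVal_le y i)) (hv.2.2 _ _)

theorem minVal_tri (x y z : Fin n → K) :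
    min (minVal v (x - y)) (minVal v (y - z)) ≤ minVal v (x - z) := by
  have : x - z = (x - y) + (y - z) := by ring
  rw [this]
  exact minVal_add hv _ _

theorem minVal_smul (c : K) (x : Fin n → K) :
    minVal v (c • x) = v c + minVal v x := by
  unfold minVal
  have h1 : ∀ i : Fin n, v ((c • x) i) = v c + v (x i) := fun i => by
    simp [Pi.smul_apply, smul_eq_mul, vmul hv]
  rw [show (fun i => v ((c • x) i)) = fun i => v c + v (x i) from funext h1]
  classical
  induction (Finset.univ : Finset (Fin n)) using Finset.induction_on with
  | empty => simp
  | @insert a s' ha ih =>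
    rw [Finset.inf_insert, Finset.inf_insert, ih]
    exact ((add_right_mono (a := v c)).map_min).symm

theorem minVal_smul_fun (c : K) (x : Fin n → K) :
    minVal v (fun i => c * x i) = v c + minVal v x := minVal_smul hv c x

/-- the ultrametric structure on `Kⁿ` -/
theorem minVal_isUltrametric :
    IsUltrametric (fun x y : Fin n → K => minVal v (x - y)) := by
  refine ⟨fun y z => minVal_sub_top_iff hv, fun x y z => minVal_tri hv y x z,
    fun y z => minVal_sub_comm hv y z⟩

theorem minVal_exists_eq [NeZero n] (x : Fin n → K) : ∃ i, minVal v x = v (x i) := by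
  obtain ⟨i, _, h⟩ := Finset.exists_mem_eq_inf (Finset.univ : Finset (Fin n))
    Finset.univ_nonempty (fun i => v (x i))
  exact ⟨i, h⟩

theorem minVal_add_eq {x y : Fin n → K} (h : minVal v x < minVal v y) :
    minVal v (x + y) = minVal v x := by
  have hne : NeZero n := by
    constructor
    rintro rfl
    have hx : minVal v x = ⊤ := le_antisymm le_top (le_minVal fun i => i.elim0)
    rw [hx] at h
    exact absurd h (not_lt.2 le_top)
  obtain ⟨i, hi⟩ := minVal_exists_eq (v := v) hv x
  refine le_antisymm ?_ (le_trans (le_min le_rfl (le_of_lt h)) (minVal_add hv x y))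
  calc minVal v (x + y) ≤ v (x i + y i) := minVal_le _ i
  _ = v (x i) := vadd_eq hv (lt_of_le_of_lt (le_of_eq hi.symm) (lt_of_lt_of_le h (minVal_le y i)))
  _ = minVal v x := hi.symm

theorem minVal_nonneg {x : Fin n → K} (h : ∀ i, 0 ≤ v (x i)) : 0 ≤ minVal v x :=
  le_minVal h

theorem minVal_mulVec {M : Matrix (Fin n) (Fin n) K} {c : WithTop Γ}
    (hM : ∀ i j, c ≤ v (M i j)) (x : Fin n → K) :
    c + minVal v x ≤ minVal v (M.mulVec x) := by
  refine le_minVal fun i => ?_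
  rw [Matrix.mulVec]
  refine vsum hv _ _ fun j _ => ?_
  rw [vmul hv]
  exact add_le_add (hM i j) (minVal_le x j)

end MinValLemmas
end NewtonAux
namespace NewtonAux
section SCProd

variable {K : Type*} [Field K] {Γ : Type*} [AddCommGroup Γ] [LinearOrder Γ] [IsOrderedAddMonoid Γ]
  {v : K → WithTop Γ} (hv : IsFieldVal v) {n : ℕ}

theorem mem_closedBall_pi {α : WithTop Γ} {y x : Fin n → K} :
    x ∈ closedBall (fun a b : Fin n → K => minVal v (a - b)) α y ↔
      ∀ i, α ≤ v (y i - x i) := by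
  rw [mem_closedBall]
  exact ⟨fun h i => le_trans h (minVal_le _ i), fun h => le_minVal h⟩

include hv

theorem update_mem_closedBall {α : WithTop Γ} {y : Fin n → K} {i : Fin n} {t : K}
    (h : α ≤ v (y i - t)) :
    Function.update y i t ∈ closedBall (fun a b : Fin n → K => minVal v (a - b)) α y := by
  rw [mem_closedBall_pi]
  intro j
  rcases eq_or_ne j i with rfl | hj
  · simpa using h
  · rw [Function.update_of_ne hj]
    simp [v0 hv]

theorem proj_biUnion (C : Set (WithTop Γ × (Fin n → K))) (i : Fin n) :
    (fun x : Fin n → K => x i) ''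
        (⋃ p ∈ C, closedBall (fun a b : Fin n → K => minVal v (a - b)) p.1 p.2) =
      ⋃ p ∈ C, closedBall (fun a b : K => v (a - b)) p.1 (p.2 i) := by
  ext t
  simp only [Set.mem_image, Set.mem_iUnion, exists_prop]
  constructor
  · rintro ⟨x, ⟨p, hp, hx⟩, rfl⟩
    exact ⟨p, hp, le_trans hx (minVal_le _ i)⟩
  · rintro ⟨p, hp, ht⟩
    exact ⟨Function.update p.2 i t, ⟨p, hp, update_mem_closedBall hv ht⟩,
      Function.update_self i t p.2⟩

theorem proj_isBall {B : Set (Fin n → K)}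
    (hB : IsBall (fun a b : Fin n → K => minVal v (a - b)) B) (i : Fin n) :
    IsBall (fun a b : K => v (a - b)) ((fun x : Fin n → K => x i) '' B) := by
  obtain ⟨C, hCne, ⟨y₀, hy₀⟩, rfl⟩ := hB
  refine ⟨(fun p => (p.1, p.2 i)) '' C, hCne.image _, ⟨y₀ i, ?_⟩, ?_⟩
  · rintro q ⟨p, hp, rfl⟩
    exact le_trans (hy₀ p hp) (minVal_le _ i)
  · rw [proj_biUnion hv C i, Set.biUnion_image]

theorem sc_prod (hsc : SphericallyComplete (fun a b : K => v (a - b))) :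
    SphericallyComplete (fun x y : Fin n → K => minVal v (x - y)) := by
  classical
  intro N hNne hNball hNchain
  rcases Nat.eq_zero_or_pos n with hn | hn
  · subst hn
    obtain ⟨B₀, hB₀⟩ := hNne
    refine ⟨fun _ => 0, fun B hB => ?_⟩
    obtain ⟨C, ⟨p₀, hp₀⟩, ⟨y₀, hy₀⟩, rfl⟩ := hNball B hB
    have hmem : y₀ ∈ ⋃ p ∈ C, closedBall (fun a b : Fin 0 → K => minVal v (a - b)) p.1 p.2 :=
      Set.mem_biUnion hp₀ (hy₀ p₀ hp₀)
    have : (fun _ : Fin 0 => (0 : K)) = y₀ := Subsingleton.elim _ _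
    rwa [this]
  · have hNZ : NeZero n := ⟨Nat.pos_iff_ne_zero.mp hn⟩
    have hproj : ∀ i : Fin n, (⋂₀ ((fun B => (fun x : Fin n → K => x i) '' B) '' N)).Nonempty := by
      intro i
      refine hsc _ (hNne.image _) ?_ ?_
      · rintro S ⟨B, hB, rfl⟩
        exact proj_isBall hv (hNball B hB) i
      · rintro S₁ ⟨B₁, hB₁, rfl⟩ S₂ ⟨B₂, hB₂, rfl⟩ hne
        rcases eq_or_ne B₁ B₂ with rfl | hBne
        · exact absurd rfl hne
        · rcases hNchain hB₁ hB₂ hBne with h | h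
          · exact Or.inl (Set.image_mono h)
          · exact Or.inr (Set.image_mono h)
    choose t ht using hproj
    refine ⟨t, fun B hB => ?_⟩
    have hBmem := hNball B hB
    obtain ⟨C, hCne, ⟨y₀, hy₀⟩, rfl⟩ := hBmem
    have hti : ∀ i : Fin n, ∃ p ∈ C, t i ∈ closedBall (fun a b : K => v (a - b)) p.1 (p.2 i) := by
      intro i
      have h1 : t i ∈ (fun x : Fin n → K => x i) ''
          (⋃ p ∈ C, closedBall (fun a b : Fin n → K => minVal v (a - b)) p.1 p.2) :=
        ht i _ (Set.mem_image_of_mem _ hB)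
      rw [proj_biUnion hv C i] at h1
      simpa using h1
    choose pf hpmem hpball using hti
    obtain ⟨i₀, _, hmax⟩ := exists_max_of_comparable (Finset.univ : Finset (Fin n))
      (fun i => closedBall (fun a b : Fin n → K => minVal v (a - b)) (pf i).1 (pf i).2)
      (fun a _ c _ => closedBall_comparable (minVal_isUltrametric hv)
        (hy₀ _ (hpmem a)) (hy₀ _ (hpmem c))) Finset.univ_nonempty
    have hx : t ∈ closedBall (fun a b : Fin n → K => minVal v (a - b)) (pf i₀).1 (pf i₀).2 := by
      rw [mem_closedBall_pi]
      intro i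
      have hupd : Function.update (pf i).2 i (t i) ∈
          closedBall (fun a b : Fin n → K => minVal v (a - b)) (pf i).1 (pf i).2 :=
        update_mem_closedBall hv (hpball i)
      have h2 := (mem_closedBall_pi (v := v)).1 (hmax i (Finset.mem_univ i) hupd) i
      rwa [Function.update_self] at h2
    exact Set.mem_biUnion (hpmem i₀) hx

end SCProd
end NewtonAux
namespace NewtonAux
section PolyLemmas

open MvPolynomial

variable {K : Type*} [Field K] {Γ : Type*} [AddCommGroup Γ] [LinearOrder Γ] [IsOrderedAddMonoid Γ]
  {v : K → WithTop Γ} (hv : IsFieldVal v) {n : ℕ}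

/-- A polynomial with coefficients in the valuation ring. -/
def IntP (v : K → WithTop Γ) (p : MvPolynomial (Fin n) K) : Prop :=
  ∀ m, 0 ≤ v (coeff m p)

include hv

theorem intP_add {p q : MvPolynomial (Fin n) K} (hp : IntP v p) (hq : IntP v q) :
    IntP v (p + q) := fun m => by
  rw [coeff_add]; exact vnonneg_add hv (hp m) (hq m)

theorem intP_zero : IntP v (0 : MvPolynomial (Fin n) K) := fun m => by
  simp [v0 hv]

theorem intP_neg {p : MvPolynomial (Fin n) K} (hp : IntP v p) : IntP v (-p) := fun m => by
  rw [coeff_neg]; rw [vneg hv]; exact hp m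

theorem intP_sum {ι : Type*} (s : Finset ι) (g : ι → MvPolynomial (Fin n) K)
    (h : ∀ i ∈ s, IntP v (g i)) : IntP v (∑ i ∈ s, g i) := fun m => by
  rw [coeff_sum]
  exact vsum hv _ _ fun i hi => h i hi m

theorem intP_monomial {c : K} (hc : 0 ≤ v c) (m : Fin n →₀ ℕ) :
    IntP v (monomial m c) := fun m' => by
  classical
  rw [coeff_monomial]
  split
  · exact hc
  · simp [v0 hv]

theorem intP_mul {p q : MvPolynomial (Fin n) K} (hp : IntP v p) (hq : IntP v q) :
    IntP v (p * q) := fun m => by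
  classical
  rw [coeff_mul]
  exact vsum hv _ _ fun x _ => vnonneg_mul hv (hp x.1) (hq x.2)

theorem intP_pderiv {p : MvPolynomial (Fin n) K} (hp : IntP v p) (i : Fin n) :
    IntP v (pderiv i p) := by
  rw [← support_sum_monomial_coeff p, map_sum]
  refine intP_sum hv _ _ fun m _ => ?_
  rw [pderiv_monomial]
  exact intP_monomial hv (vnonneg_mul hv (hp m) (vnat hv _)) _

theorem intP_eval {p : MvPolynomial (Fin n) K} (hp : IntP v p) {x : Fin n → K}
    (hx : ∀ i, 0 ≤ v (x i)) : 0 ≤ v (eval x p) := by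
  rw [eval_eq]
  refine vsum hv _ _ fun m _ => vnonneg_mul hv (hp m) (vprod hv _ _ fun i _ => vpow hv (hx i) _)

theorem intP_det {M : Matrix (Fin n) (Fin n) (MvPolynomial (Fin n) K)}
    (hM : ∀ i j, IntP v (M i j)) : IntP v M.det := by
  rw [Matrix.det_apply]
  refine intP_sum hv _ _ fun σ _ => ?_
  classical
  have hone : IntP v (1 : MvPolynomial (Fin n) K) := fun m => by
    rw [coeff_one]
    split
    · exact le_of_eq (v1 hv).symm
    · simp [v0 hv]
  have hprod : IntP v (∏ i, M (σ i) i) :=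
    Finset.prod_induction _ (IntP v) (fun a c ha hc => intP_mul hv ha hc) hone
      (fun i _ => hM (σ i) i)
  rcases Int.units_eq_one_or (Equiv.Perm.sign σ) with hs | hs <;> rw [hs]
  · simpa using hprod
  · intro m
    have : ((-1 : ℤˣ) • ∏ i, M (σ i) i) = -(∏ i, M (σ i) i) := by
      simp [Units.smul_def]
    rw [this]
    exact intP_neg hv hprod m

end PolyLemmas
end NewtonAux
namespace NewtonAux
section Taylor

open MvPolynomial

variable {K : Type*} [Field K] {Γ : Type*} [AddCommGroup Γ] [LinearOrder Γ] [IsOrderedAddMonoid Γ]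
  {v : K → WithTop Γ} (hv : IsFieldVal v) {n : ℕ}

/-- The quadratic remainder of the Taylor expansion. -/
noncomputable def Rem (x h : Fin n → K) (g : MvPolynomial (Fin n) K) : K :=
  eval (fun j => x j + h j) g - eval x g - ∑ j, eval x (pderiv j g) * h j

theorem Rem_add (x h : Fin n → K) (p q : MvPolynomial (Fin n) K) :
    Rem x h (p + q) = Rem x h p + Rem x h q := by
  unfold Rem
  simp only [map_add, add_mul, Finset.sum_add_distrib]
  ring

theorem Rem_zero (x h : Fin n → K) : Rem x h (0 : MvPolynomial (Fin n) K) = 0 := by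
  simp [Rem]

theorem Rem_sum (x h : Fin n → K) {ι : Type*} (s : Finset ι)
    (g : ι → MvPolynomial (Fin n) K) :
    Rem x h (∑ i ∈ s, g i) = ∑ i ∈ s, Rem x h (g i) := by
  classical
  induction s using Finset.induction_on with
  | empty => simp [Rem_zero]
  | @insert a s' ha ih => rw [Finset.sum_insert ha, Finset.sum_insert ha, Rem_add, ih]

theorem Rem_monomial (x h : Fin n → K) (m : Fin n →₀ ℕ) (c : K) :
    Rem x h (monomial m c) = c * Rem x h (monomial m 1) := by
  have hc : monomial m c = C c * monomial m 1 := by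
    rw [C_mul_monomial, mul_one]
  rw [hc]
  unfold Rem
  simp only [eval_mul, eval_C, pderiv_C_mul, map_mul, Finset.mul_sum]
  ring_nf
  rw [Finset.mul_sum]
  ring

theorem Rem_mul_X (x h : Fin n → K) (p : MvPolynomial (Fin n) K) (i : Fin n) :
    Rem x h (p * X i) = x i * Rem x h p +
      h i * (eval (fun j => x j + h j) p - eval x p) := by
  classical
  unfold Rem
  have hpd : ∀ j, eval x (pderiv j (p * X i)) =
      eval x (pderiv j p) * x i + eval x p * (if i = j then 1 else 0) := by
    intro j
    rw [pderiv_mul, map_add, map_mul, map_mul, eval_X, pderiv_X, Pi.single_apply]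
    split <;> simp_all
  simp only [map_mul, eval_X, hpd]
  rw [show (∑ j, (eval x (pderiv j p) * x i + eval x p * (if i = j then 1 else 0)) * h j)
      = x i * (∑ j, eval x (pderiv j p) * h j) + eval x p * h i from ?_]
  · ring
  · rw [show (∑ j, (eval x (pderiv j p) * x i + eval x p * (if i = j then 1 else 0)) * h j)
        = (∑ j, eval x (pderiv j p) * x i * h j)
          + ∑ j, eval x p * (if i = j then 1 else 0) * h j from by
      rw [← Finset.sum_add_distrib]; congr 1; funext j; ring]
    congr 1
    · rw [Finset.mul_sum]; congr 1; funext j; ring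
    · rw [Finset.sum_eq_single i]
      · simp
      · intro c _ hc
        simp [Ne.symm hc]
      · simp

include hv

theorem rem_monomial_bound {x h : Fin n → K} (hx : ∀ i, 0 ≤ v (x i))
    (hh : ∀ i, 0 ≤ v (h i)) (m : Fin n →₀ ℕ) :
    minVal v h + minVal v h ≤ v (Rem x h (monomial m 1)) := by
  classical
  set μ := minVal v h with hμ
  have hμ0 : 0 ≤ μ := minVal_nonneg hv hh
  have hkey : ∀ (N : ℕ) (m : Fin n →₀ ℕ), (m.sum fun _ k => k) ≤ N →
      μ + μ ≤ v (Rem x h (monomial m 1)) := by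
    intro N
    induction N with
    | zero =>
      intro m hm
      have hm0 : m = 0 := by
        rw [Finsupp.sum] at hm
        ext i
        by_cases hi : m i = 0
        · simp [hi]
        · have hmem : i ∈ m.support := Finsupp.mem_support_iff.2 hi
          have hle : m i ≤ ∑ a ∈ m.support, m a :=
            Finset.single_le_sum (f := fun j => m j) (fun _ _ => Nat.zero_le _) hmem
          omega
      subst hm0
      rw [show monomial (0 : Fin n →₀ ℕ) (1 : K) = 1 from by simp]
      unfold Rem
      simp [v0 hv]
    | succ N ih =>
      intro m hm
      by_cases hm0 : m = 0
      · subst hm0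
        rw [show monomial (0 : Fin n →₀ ℕ) (1 : K) = 1 from by simp]
        unfold Rem
        simp [v0 hv]
      · obtain ⟨i, hi⟩ : ∃ i, m i ≠ 0 := by
          by_contra hc
          push_neg at hc
          exact hm0 (Finsupp.ext fun i => hc i)
        set m' := m - Finsupp.single i 1 with hm'
        have hmm : m' + Finsupp.single i 1 = m := by
          ext j
          rcases eq_or_ne j i with rfl | hj
          · simp [hm', Finsupp.single_apply]
            omega
          · simp [hm', Finsupp.single_apply, hj.symm, Ne.symm hj]
        have hsum : (m'.sum fun _ k => k) ≤ N := by
          have h1 : (m.sum fun _ k => k) = (m'.sum fun _ k => k) + 1 := by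
            rw [← hmm, Finsupp.sum_add_index' (fun _ => rfl) (fun _ _ _ => rfl)]
            simp
          omega
        have hmon : monomial m (1 : K) = monomial m' 1 * X i := by
          rw [X, monomial_mul, mul_one, hmm]
        rw [hmon, Rem_mul_X]
        have h1 : μ + μ ≤ v (x i * Rem x h (monomial m' 1)) := by
          rw [vmul hv]
          calc μ + μ = 0 + (μ + μ) := by rw [zero_add]
          _ ≤ v (x i) + v (Rem x h (monomial m' 1)) := add_le_add (hx i) (ih m' hsum)
        have h2 : μ + μ ≤ v (h i * (eval (fun j => x j + h j) (monomial m' 1)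
            - eval x (monomial m' 1))) := by
          rw [vmul hv]
          refine add_le_add (minVal_le h i) ?_
          have hEq : eval (fun j => x j + h j) (monomial m' 1) - eval x (monomial m' 1)
              = Rem x h (monomial m' 1) + ∑ j, eval x (pderiv j (monomial m' 1)) * h j := by
            unfold Rem; ring
          rw [hEq]
          refine le_trans (le_min ?_ ?_) (vadd hv _ _)
          · exact le_trans (le_add_of_nonneg_left hμ0) (ih m' hsum)
          · refine vsum hv _ _ fun j _ => ?_
            rw [vmul hv]
            calc μ = 0 + μ := (zero_add μ).symm
            _ ≤ _ := add_le_add (intP_eval hv (intP_pderiv hv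
                (intP_monomial hv (le_of_eq (v1 hv).symm) m') j) hx) (minVal_le h j)
        exact le_trans (le_min h1 h2) (vadd hv _ _)
  exact hkey (m.sum fun _ k => k) m le_rfl

/-- Taylor's bound: the remainder is quadratically small. -/
theorem rem_bound {x h : Fin n → K} {g : MvPolynomial (Fin n) K} (hg : IntP v g)
    (hx : ∀ i, 0 ≤ v (x i)) (hh : ∀ i, 0 ≤ v (h i)) :
    minVal v h + minVal v h ≤ v (Rem x h g) := by
  rw [← support_sum_monomial_coeff g, Rem_sum]
  refine vsum hv _ _ fun m _ => ?_
  rw [Rem_monomial, vmul hv]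
  calc minVal v h + minVal v h = 0 + (minVal v h + minVal v h) := (zero_add _).symm
  _ ≤ _ := add_le_add (hg m) (rem_monomial_bound hv hx hh m)

/-- Lipschitz estimate for integral polynomials. -/
theorem eval_sub_bound {x x' : Fin n → K} {g : MvPolynomial (Fin n) K} (hg : IntP v g)
    (hx : ∀ i, 0 ≤ v (x i)) (hx' : ∀ i, 0 ≤ v (x' i)) :
    minVal v (x' - x) ≤ v (eval x' g - eval x g) := by
  set h : Fin n → K := x' - x with hh
  have hhi : ∀ i, h i = x' i - x i := fun i => rfl
  have hint : ∀ i, 0 ≤ v (h i) := fun i => by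
    rw [hhi]
    exact le_trans (le_min (hx' i) (hx i)) (hv.2.2 _ _)
  have hx'' : x' = fun j => x j + h j := by
    funext j; rw [hhi]; ring
  have hgoal : eval x' g - eval x g = Rem x h g + ∑ j, eval x (pderiv j g) * h j := by
    rw [hx'']
    unfold Rem
    ring
  rw [hgoal]
  refine le_trans (le_min ?_ ?_) (vadd hv _ _)
  · exact le_trans (le_add_of_nonneg_left (minVal_nonneg hv hint)) (rem_bound hv hg hx hint)
  · refine vsum hv _ _ fun j _ => ?_
    rw [vmul hv]
    calc minVal v h = 0 + minVal v h := (zero_add _).symm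
    _ ≤ _ := add_le_add (intP_eval hv (intP_pderiv hv hg j) hx) (minVal_le h j)

end Taylor
end NewtonAux
namespace NewtonAux
section MatK

variable {K : Type*} [Field K] {Γ : Type*} [AddCommGroup Γ] [LinearOrder Γ] [IsOrderedAddMonoid Γ]
  {v : K → WithTop Γ} (hv : IsFieldVal v) {n : ℕ}

include hv

theorem vdet {M : Matrix (Fin n) (Fin n) K} (hM : ∀ i j, 0 ≤ v (M i j)) :
    0 ≤ v M.det := by
  classical
  rw [Matrix.det_apply]
  refine vsum hv _ _ fun σ _ => ?_
  have hprod : 0 ≤ v (∏ i, M (σ i) i) := vprod hv _ _ fun i _ => hM (σ i) i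
  rcases Int.units_eq_one_or (Equiv.Perm.sign σ) with hs | hs <;> rw [hs]
  · simpa using hprod
  · have : ((-1 : ℤˣ) • ∏ i, M (σ i) i) = -(∏ i, M (σ i) i) := by
      simp [Units.smul_def]
    rw [this, vneg hv]
    exact hprod

theorem vadj {M : Matrix (Fin n) (Fin n) K} (hM : ∀ i j, 0 ≤ v (M i j)) (i j : Fin n) :
    0 ≤ v (M.adjugate i j) := by
  classical
  rw [Matrix.adjugate_apply]
  refine vdet hv fun k l => ?_
  rw [Matrix.updateRow_apply]
  split
  · rw [Pi.single_apply]
    split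
    · simp [v1 hv]
    · simp [v0 hv]
  · exact hM k l

end MatK
end NewtonAux
namespace NewtonAux
section Main

open MvPolynomial

variable {K : Type*} [Field K] {Γ : Type*} [AddCommGroup Γ] [LinearOrder Γ] [IsOrderedAddMonoid Γ]

/-- shifting radii by a finite valuation -/
theorem exists_shift {c : WithTop Γ} (hc : c ≠ ⊤) :
    ∃ ρ : WithTop Γ → WithTop Γ, ∀ t m, (t ≤ c + m ↔ ρ t ≤ m) := by
  lift c to Γ using hc
  refine ⟨WithTop.map (fun g => -c + g), fun t m => ?_⟩
  cases t with
  | top =>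
    simp only [WithTop.map_top]
    rw [top_le_iff, top_le_iff, WithTop.add_eq_top]
    simp [WithTop.coe_ne_top]
  | coe g =>
    cases m with
    | top => simp
    | coe mm =>
      rw [← WithTop.coe_add, WithTop.map_coe, WithTop.coe_le_coe, WithTop.coe_le_coe]
      constructor
      · intro h
        have := add_le_add_right h (-c)
        rwa [neg_add_cancel_left] at this
      · intro h
        have := add_le_add_right h c
        rwa [add_neg_cancel_left] at this

variable {n : ℕ}

/-- The Jacobian matrix of the system `f` at the point `x`. -/
noncomputable def Jm (f : Fin n → MvPolynomial (Fin n) K) (x : Fin n → K) :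
    Matrix (Fin n) (Fin n) K :=
  Matrix.of fun i j => eval x (pderiv j (f i))

/-- The vector of values of the system `f` at the point `x`. -/
noncomputable def fvv (f : Fin n → MvPolynomial (Fin n) K) (x : Fin n → K) : Fin n → K :=
  fun i => eval x (f i)

/-- `Phi v f x = v (J_f*(x) f(x))`. -/
noncomputable def Phi (v : K → WithTop Γ) (f : Fin n → MvPolynomial (Fin n) K)
    (x : Fin n → K) : WithTop Γ :=
  minVal v ((Jm f x).adjugate.mulVec (fvv f x))

/-- The Newton step at `x`. -/
noncomputable def eps (f : Fin n → MvPolynomial (Fin n) K) (x : Fin n → K) : Fin n → K :=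
  ((Jm f x).det)⁻¹ • ((Jm f x).adjugate.mulVec (fvv f x))

/-- The invariant ball for the Newton iteration. -/
def Ynewt (v : K → WithTop Γ) (f : Fin n → MvPolynomial (Fin n) K) (b : Fin n → K) :
    Set (Fin n → K) :=
  {x | Phi v f b ≤ v (Jm f b).det + minVal v (x - b)}

variable {v : K → WithTop Γ} {f : Fin n → MvPolynomial (Fin n) K} {b : Fin n → K}
  (hv : IsFieldVal v) (hf : ∀ i m, 0 ≤ v (MvPolynomial.coeff m (f i)))
  (hb : ∀ i, 0 ≤ v (b i))
  (hN : v (Jm f b).det + v (Jm f b).det < minVal v (fvv f b))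

/-- Taylor expansion of the system. -/
theorem tay (y x : Fin n → K) :
    fvv f x = fvv f y + (Jm f y).mulVec (x - y) + (fun i => Rem y (x - y) (f i)) := by
  funext i
  have hx : (fun j => y j + (x j - y j)) = x := by funext j; ring
  simp only [fvv, Pi.add_apply, Rem, Jm, Matrix.mulVec, dotProduct,
    Matrix.of_apply, Pi.sub_apply, mul_sub]
  rw [hx]
  ring

include hv hf

theorem Jm_int {x : Fin n → K} (hx : ∀ i, 0 ≤ v (x i)) (i j : Fin n) :
    0 ≤ v (Jm f x i j) :=
  intP_eval hv (intP_pderiv hv (hf i) j) hx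

include hb

theorem vd_nonneg : 0 ≤ v (Jm f b).det := vdet hv (Jm_int hv hf hb)

include hN

theorem vd_ne : v (Jm f b).det ≠ ⊤ := by
  intro h
  rw [h] at hN
  exact absurd hN (by simp)

theorem gamma_lb : v (Jm f b).det + v (Jm f b).det < Phi v f b := by
  refine lt_of_lt_of_le hN ?_
  have h := minVal_mulVec hv (M := (Jm f b).adjugate) (c := 0)
    (fun i j => vadj hv (Jm_int hv hf hb) i j) (fvv f b)
  rwa [zero_add] at h

theorem bY : b ∈ Ynewt v f b := by
  show Phi v f b ≤ v (Jm f b).det + minVal v (b - b)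
  rw [sub_self, (minVal_top_iff hv).2 rfl, add_top]
  exact le_top

theorem Y_gap {x : Fin n → K} (hx : x ∈ Ynewt v f b) :
    v (Jm f b).det < minVal v (x - b) := by
  have h1 : v (Jm f b).det + v (Jm f b).det < v (Jm f b).det + minVal v (x - b) :=
    lt_of_lt_of_le (gamma_lb hv hf hb hN) hx
  exact (WithTop.add_lt_add_iff_left (vd_ne hv hf hb hN)).1 h1

theorem Y_sub_int {x : Fin n → K} (hx : x ∈ Ynewt v f b) (i : Fin n) :
    0 ≤ v (x i - b i) :=
  le_trans (le_trans (vd_nonneg hv hf hb) (le_of_lt (Y_gap hv hf hb hN hx)))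
    (minVal_le (x - b) i)

theorem Y_int {x : Fin n → K} (hx : x ∈ Ynewt v f b) (i : Fin n) : 0 ≤ v (x i) := by
  have h : x i = b i + (x i - b i) := by ring
  rw [h]
  exact vnonneg_add hv (hb i) (Y_sub_int hv hf hb hN hx i)

theorem det_eq {x : Fin n → K} (hx : x ∈ Ynewt v f b) :
    v (Jm f x).det = v (Jm f b).det := by
  set P : MvPolynomial (Fin n) K := (Matrix.of fun i j => pderiv j (f i) :
    Matrix (Fin n) (Fin n) (MvPolynomial (Fin n) K)).det with hP
  have hPint : IntP v P := intP_det hv fun i j => fun m => by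
    simpa using intP_pderiv hv (hf i) j m
  have hPeval : ∀ z : Fin n → K, eval z P = (Jm f z).det := by
    intro z
    rw [hP, RingHom.map_det]
    congr 1
  refine veq_of_vsub_gt hv ?_
  have hbound := eval_sub_bound (x := b) (x' := x) hv hPint hb (Y_int hv hf hb hN hx)
  rw [hPeval x, hPeval b] at hbound
  exact lt_of_lt_of_le (Y_gap hv hf hb hN hx) hbound

theorem det_ne {x : Fin n → K} (hx : x ∈ Ynewt v f b) : (Jm f x).det ≠ 0 := by
  intro h
  exact (vd_ne hv hf hb hN) ((det_eq hv hf hb hN hx).symm.trans ((hv.1 _).2 h))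

theorem Jeps {x : Fin n → K} (hx : x ∈ Ynewt v f b) :
    (Jm f x).mulVec (eps f x) = fvv f x := by
  unfold eps
  rw [Matrix.mulVec_smul, Matrix.mulVec_mulVec, Matrix.mul_adjugate,
    Matrix.smul_mulVec, Matrix.one_mulVec, smul_smul,
    inv_mul_cancel₀ (det_ne hv hf hb hN hx), one_smul]

theorem veps {x : Fin n → K} (hx : x ∈ Ynewt v f b) :
    v (Jm f b).det + minVal v (eps f x) = Phi v f x := by
  unfold eps Phi
  rw [minVal_smul hv, ← det_eq hv hf hb hN hx, ← add_assoc, ← vmul hv,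
    mul_inv_cancel₀ (det_ne hv hf hb hN hx), v1 hv, zero_add]

theorem eps_zero_iff {x : Fin n → K} (hx : x ∈ Ynewt v f b) :
    eps f x = 0 ↔ fvv f x = 0 := by
  constructor
  · intro h
    have := Jeps hv hf hb hN hx
    rw [h, Matrix.mulVec_zero] at this
    exact this.symm
  · intro h
    unfold eps
    rw [h, Matrix.mulVec_zero, smul_zero]

theorem phi_top_iff {x : Fin n → K} (hx : x ∈ Ynewt v f b) :
    Phi v f x = ⊤ ↔ fvv f x = 0 := by
  constructor
  · intro h
    have h2 := veps hv hf hb hN hx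
    rw [h] at h2
    have h3 : minVal v (eps f x) = ⊤ := by
      by_contra h4
      exact (WithTop.add_ne_top.2 ⟨vd_ne hv hf hb hN, h4⟩) h2
    exact (eps_zero_iff hv hf hb hN hx).1 ((minVal_top_iff hv).1 h3)
  · intro h
    unfold Phi
    rw [h, Matrix.mulVec_zero]
    exact (minVal_top_iff hv).2 rfl

/-- The key estimate: values of `Phi` do not decrease inside the small ball. -/
theorem key {x y : Fin n → K} (hx : x ∈ Ynewt v f b) (hy : y ∈ Ynewt v f b)
    (hγy : Phi v f b ≤ Phi v f y)
    (hxy : Phi v f y ≤ v (Jm f b).det + minVal v (x - y)) :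
    Phi v f y ≤ Phi v f x := by
  by_cases heq : x = y
  · subst heq; exact le_rfl
  have hμtop : minVal v (x - y) ≠ ⊤ := fun h => heq ((minVal_sub_top_iff hv).1 h)
  set μ := minVal v (x - y) with hμ
  have hvdμ : v (Jm f b).det < μ := by
    have h1 : v (Jm f b).det + v (Jm f b).det < v (Jm f b).det + μ :=
      lt_of_lt_of_le (gamma_lb hv hf hb hN) (le_trans hγy hxy)
    exact (WithTop.add_lt_add_iff_left (vd_ne hv hf hb hN)).1 h1
  have hxint := Y_int hv hf hb hN hx
  have hyint := Y_int hv hf hb hN hy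
  have hhint : ∀ i, 0 ≤ v ((x - y) i) := fun i => by
    rw [Pi.sub_apply]
    exact le_trans (le_min (hxint i) (hyint i)) (hv.2.2 _ _)
  set A := (Jm f x).adjugate with hA
  set Qv : Fin n → K := fun i => Rem y (x - y) (f i) with hQv
  set w : Fin n → K := eps f y + (x - y) with hw
  have hAint : ∀ i j, 0 ≤ v (A i j) := vadj hv (Jm_int hv hf hxint)
  -- the decomposition
  have hdec : A.mulVec (fvv f x) =
      ((Jm f x).det • w) + ((A * (Jm f y - Jm f x)).mulVec w) + A.mulVec Qv := by
    have h1 : A * Jm f y = (Jm f x).det • (1 : Matrix (Fin n) (Fin n) K)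
        + A * (Jm f y - Jm f x) := by
      rw [Matrix.mul_sub, Matrix.adjugate_mul]
      abel
    calc A.mulVec (fvv f x)
        = A.mulVec (fvv f y + (Jm f y).mulVec (x - y) + Qv) := by rw [← tay]
      _ = A.mulVec ((Jm f y).mulVec (eps f y)) + A.mulVec ((Jm f y).mulVec (x - y))
          + A.mulVec Qv := by
          rw [Matrix.mulVec_add, Matrix.mulVec_add, Jeps hv hf hb hN hy]
      _ = (A * Jm f y).mulVec (eps f y) + (A * Jm f y).mulVec (x - y) + A.mulVec Qv := by
          rw [Matrix.mulVec_mulVec, Matrix.mulVec_mulVec]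
      _ = (A * Jm f y).mulVec w + A.mulVec Qv := by rw [hw, Matrix.mulVec_add]
      _ = _ := by
          rw [h1, Matrix.add_mulVec, Matrix.smul_mulVec, Matrix.one_mulVec]
  -- bound for w
  have hwlb : Phi v f y ≤ v (Jm f b).det + minVal v w := by
    calc Phi v f y ≤ min (v (Jm f b).det + minVal v (eps f y)) (v (Jm f b).det + μ) :=
        le_min (le_of_eq (veps hv hf hb hN hy).symm) hxy
    _ = v (Jm f b).det + min (minVal v (eps f y)) μ :=
        ((add_right_mono (a := v (Jm f b).det)).map_min).symm
    _ ≤ v (Jm f b).det + minVal v w := by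
        exact add_le_add_right (minVal_add hv _ _) _
  -- three bounds
  have hB1 : Phi v f y ≤ minVal v ((Jm f x).det • w) := by
    rw [minVal_smul hv, det_eq hv hf hb hN hx]
    exact hwlb
  have hμw : v (Jm f b).det + minVal v w ≤ μ + minVal v w :=
    add_le_add_left (le_of_lt hvdμ) _
  have hB2 : Phi v f y ≤ minVal v ((A * (Jm f y - Jm f x)).mulVec w) := by
    have hS : ∀ i j, μ ≤ v ((A * (Jm f y - Jm f x)) i j) := by
      intro i j
      rw [Matrix.mul_apply]
      refine vsum hv _ _ fun k _ => ?_
      rw [vmul hv]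
      calc μ = 0 + μ := (zero_add μ).symm
      _ ≤ v (A i k) + v ((Jm f y - Jm f x) k j) := by
          refine add_le_add (hAint i k) ?_
          rw [Matrix.sub_apply]
          have := eval_sub_bound hv (intP_pderiv hv (hf k) j) hxint hyint
          rwa [hμ, minVal_sub_comm hv]
    exact le_trans (le_trans hwlb hμw) (minVal_mulVec hv hS w)
  have hB3 : Phi v f y ≤ minVal v (A.mulVec Qv) := by
    have hQ : μ + μ ≤ minVal v Qv := le_minVal fun i =>
      rem_bound hv (hf i) hyint hhint
    have h1 : Phi v f y ≤ μ + μ :=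
      le_trans hxy (add_le_add_left (le_of_lt hvdμ) μ)
    have h := minVal_mulVec hv (M := A) (c := 0) hAint Qv
    rw [zero_add] at h
    exact le_trans (le_trans h1 hQ) h
  calc Phi v f y
      ≤ min (min (minVal v ((Jm f x).det • w))
          (minVal v ((A * (Jm f y - Jm f x)).mulVec w))) (minVal v (A.mulVec Qv)) :=
        le_min (le_min hB1 hB2) hB3
    _ ≤ min (minVal v ((Jm f x).det • w + (A * (Jm f y - Jm f x)).mulVec w))
          (minVal v (A.mulVec Qv)) := min_le_min (minVal_add hv _ _) le_rfl
    _ ≤ minVal v ((Jm f x).det • w + (A * (Jm f y - Jm f x)).mulVec w + A.mulVec Qv) :=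
        minVal_add hv _ _
    _ = Phi v f x := by rw [← hdec]; rfl

theorem phiY {x : Fin n → K} (hx : x ∈ Ynewt v f b) : Phi v f b ≤ Phi v f x :=
  key hv hf hb hN hx (bY hv hf hb hN) le_rfl hx

/-- The Newton step strictly improves. -/
theorem step {x : Fin n → K} (hx : x ∈ Ynewt v f b) (hfx : fvv f x ≠ 0) :
    (x - eps f x) ∈ Ynewt v f b ∧ Phi v f x < Phi v f (x - eps f x) := by
  set z := x - eps f x with hz
  have hzx : z - x = -(eps f x) := by rw [hz]; ring
  have hmzx : minVal v (z - x) = minVal v (eps f x) := by rw [hzx, minVal_neg hv]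
  have hvdz : v (Jm f b).det + minVal v (z - x) = Phi v f x := by
    rw [hmzx]; exact veps hv hf hb hN hx
  have hzY : z ∈ Ynewt v f b := by
    show Phi v f b ≤ v (Jm f b).det + minVal v (z - b)
    have h1 : min (minVal v (z - x)) (minVal v (x - b)) ≤ minVal v (z - b) :=
      minVal_tri hv z x b
    calc Phi v f b
        ≤ min (v (Jm f b).det + minVal v (z - x)) (v (Jm f b).det + minVal v (x - b)) := by
          refine le_min ?_ hx
          rw [hvdz]
          exact phiY hv hf hb hN hx
      _ = v (Jm f b).det + min (minVal v (z - x)) (minVal v (x - b)) :=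
          ((add_right_mono (a := v (Jm f b).det)).map_min).symm
      _ ≤ _ := add_le_add_right h1 _
  refine ⟨hzY, ?_⟩
  -- f(z) = Qv
  set m := minVal v (eps f x) with hm
  have hmne : m ≠ ⊤ := by
    intro h
    exact hfx ((eps_zero_iff hv hf hb hN hx).1 ((minVal_top_iff hv).1 h))
  have hvdm : v (Jm f b).det < m := by
    have h1 : v (Jm f b).det + v (Jm f b).det < v (Jm f b).det + m := by
      rw [← hm] at *
      calc v (Jm f b).det + v (Jm f b).det < Phi v f b := gamma_lb hv hf hb hN
      _ ≤ Phi v f x := phiY hv hf hb hN hx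
      _ = v (Jm f b).det + m := (veps hv hf hb hN hx).symm
    exact (WithTop.add_lt_add_iff_left (vd_ne hv hf hb hN)).1 h1
  have hfz : fvv f z = fun i => Rem x (z - x) (f i) := by
    have h1 := tay (f := f) x z
    rw [hzx] at h1
    rw [Matrix.mulVec_neg, Jeps hv hf hb hN hx] at h1
    rw [h1, hzx]
    funext i
    simp
  have hzint : ∀ i, 0 ≤ v ((z - x) i) := fun i => by
    rw [hzx, Pi.neg_apply]
    rw [vneg hv]
    exact le_trans (le_trans (vd_nonneg hv hf hb) (le_of_lt hvdm)) (minVal_le _ i)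
  have hQb : m + m ≤ minVal v (fvv f z) := by
    rw [hfz]
    refine le_minVal fun i => ?_
    have := rem_bound hv (hf i) (Y_int hv hf hb hN hx) hzint
    rwa [hmzx] at this
  have hPz : m + m ≤ Phi v f z := by
    have h := minVal_mulVec hv (M := (Jm f z).adjugate) (c := 0)
      (vadj hv (Jm_int hv hf (Y_int hv hf hb hN hzY))) (fvv f z)
    rw [zero_add] at h
    exact le_trans hQb h
  calc Phi v f x = v (Jm f b).det + m := (veps hv hf hb hN hx).symm
  _ < m + m := WithTop.add_lt_add_right hmne hvdm
  _ ≤ Phi v f z := hPz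

end Main
end NewtonAux
namespace NewtonAux
section Exist

open MvPolynomial

variable {K : Type*} [Field K] {Γ : Type*} [AddCommGroup Γ] [LinearOrder Γ] [IsOrderedAddMonoid Γ]
  {n : ℕ} {v : K → WithTop Γ} {f : Fin n → MvPolynomial (Fin n) K} {b : Fin n → K}
  (hv : IsFieldVal v) (hf : ∀ i m, 0 ≤ v (MvPolynomial.coeff m (f i)))
  (hb : ∀ i, 0 ≤ v (b i))
  (hN : v (Jm f b).det + v (Jm f b).det < minVal v (fvv f b))

include hv hf hb hN

theorem exists_root (hsc : SphericallyComplete (fun a c : K => v (a - c))) :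
    ∃ a ∈ Ynewt v f b, fvv f a = 0 := by
  classical
  obtain ⟨ρ, hρ⟩ := exists_shift (c := v (Jm f b).det) (vd_ne hv hf hb hN)
  set r : {x : Fin n → K // x ∈ Ynewt v f b} → {x : Fin n → K // x ∈ Ynewt v f b} → Prop :=
    fun a c => a = c ∨ (Phi v f a.1 < Phi v f c.1 ∧
      Phi v f a.1 ≤ v (Jm f b).det + minVal v (c.1 - a.1)) with hr
  have htrans : ∀ {a c e}, r a c → r c e → r a e := by
    rintro a c e (rfl | ⟨h1, h2⟩) h
    · exact h
    rcases h with rfl | ⟨h3, h4⟩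
    · exact Or.inr ⟨h1, h2⟩
    · refine Or.inr ⟨lt_trans h1 h3, ?_⟩
      calc Phi v f a.1
          ≤ min (v (Jm f b).det + minVal v (e.1 - c.1))
            (v (Jm f b).det + minVal v (c.1 - a.1)) :=
            le_min (le_trans (le_of_lt h1) h4) h2
        _ = v (Jm f b).det + min (minVal v (e.1 - c.1)) (minVal v (c.1 - a.1)) :=
            ((add_right_mono (a := v (Jm f b).det)).map_min).symm
        _ ≤ v (Jm f b).det + minVal v (e.1 - a.1) :=
            add_le_add_right (minVal_tri hv e.1 c.1 a.1) _
  have hmemcb : ∀ (t : WithTop Γ) (y w : Fin n → K),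
      w ∈ closedBall (fun x z : Fin n → K => minVal v (x - z)) (ρ t) y ↔
        t ≤ v (Jm f b).det + minVal v (w - y) := by
    intro t y w
    rw [mem_closedBall, minVal_sub_comm hv y w]
    exact (hρ t _).symm
  set Bs : {x : Fin n → K // x ∈ Ynewt v f b} → Set (Fin n → K) := fun a =>
    closedBall (fun x z : Fin n → K => minVal v (x - z)) (ρ (Phi v f a.1)) a.1 ∩
      closedBall (fun x z : Fin n → K => minVal v (x - z)) (ρ (Phi v f b)) b with hBs
  have hself : ∀ a, a.1 ∈ Bs a := by
    intro a
    exact ⟨(hmemcb _ _ _).2 (by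
      rw [sub_self, (minVal_top_iff hv).2 rfl, add_top]; exact le_top),
      (hmemcb _ _ _).2 a.2⟩
  have hball : ∀ a, IsBall (fun x z : Fin n → K => minVal v (x - z)) (Bs a) := by
    intro a
    have hBsa : Bs a = closedBall (fun x z : Fin n → K => minVal v (x - z))
        (ρ (Phi v f a.1)) a.1 ∩
        closedBall (fun x z : Fin n → K => minVal v (x - z)) (ρ (Phi v f b)) b := rfl
    rcases closedBall_comparable (minVal_isUltrametric hv) (hself a).1 (hself a).2 with h | h
    · rw [hBsa, Set.inter_eq_left.2 h]
      exact closedBall_isBall (minVal_isUltrametric hv) _ _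
    · rw [hBsa, Set.inter_eq_right.2 h]
      exact closedBall_isBall (minVal_isUltrametric hv) _ _
  have hmono : ∀ a c', r a c' → Bs c' ⊆ Bs a := by
    intro a c' hr' w hw
    rcases hr' with rfl | ⟨h1, h2⟩
    · exact hw
    obtain ⟨hw1, hw2⟩ := hw
    refine ⟨(hmemcb _ _ _).2 ?_, hw2⟩
    have hw1' := (hmemcb _ _ _).1 hw1
    calc Phi v f a.1
        ≤ min (v (Jm f b).det + minVal v (w - c'.1))
          (v (Jm f b).det + minVal v (c'.1 - a.1)) :=
          le_min (le_trans (le_of_lt h1) hw1') h2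
      _ = v (Jm f b).det + min (minVal v (w - c'.1)) (minVal v (c'.1 - a.1)) :=
          ((add_right_mono (a := v (Jm f b).det)).map_min).symm
      _ ≤ v (Jm f b).det + minVal v (w - a.1) :=
          add_le_add_right (minVal_tri hv w c'.1 a.1) _
  have hchain : ∀ c : Set {x : Fin n → K // x ∈ Ynewt v f b}, IsChain r c →
      ∃ ub, ∀ a ∈ c, r a ub := by
    intro c hc
    rcases Set.eq_empty_or_nonempty c with rfl | hcne
    · exact ⟨⟨b, bY hv hf hb hN⟩, by simp⟩
    by_cases hmax : ∃ mx ∈ c, ∀ a ∈ c, r a mx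
    · obtain ⟨mx, _, h⟩ := hmax
      exact ⟨mx, h⟩
    push_neg at hmax
    have hsucc : ∀ a ∈ c, ∃ a' ∈ c, Phi v f a.1 < Phi v f a'.1 ∧
        Phi v f a.1 ≤ v (Jm f b).det + minVal v (a'.1 - a.1) := by
      intro a ha
      obtain ⟨a', ha', hna⟩ := hmax a ha
      have hne : a' ≠ a := fun h => hna (h ▸ Or.inl rfl)
      have hra : r a a' := (hc ha ha' hne.symm).elim id fun h => absurd h hna
      rcases hra with rfl | ⟨h1, h2⟩
      · exact absurd (Or.inl rfl) hna
      · exact ⟨a', ha', h1, h2⟩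
    have hsc' : (⋂₀ (Bs '' c)).Nonempty := by
      refine sc_prod hv hsc _ (hcne.image _) ?_ ?_
      · rintro S ⟨a, _, rfl⟩
        exact hball a
      · rintro S1 ⟨a1, ha1, rfl⟩ S2 ⟨a2, ha2, rfl⟩ hne
        have hne' : a1 ≠ a2 := fun h => hne (by rw [h])
        rcases hc ha1 ha2 hne' with h | h
        · exact Or.inr (hmono a1 a2 h)
        · exact Or.inl (hmono a2 a1 h)
    obtain ⟨xs, hxs⟩ := hsc'
    have hxsB : ∀ a ∈ c, xs ∈ Bs a := fun a ha => hxs _ (Set.mem_image_of_mem _ ha)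
    have hxsY : xs ∈ Ynewt v f b := by
      obtain ⟨a, ha⟩ := hcne
      exact (hmemcb _ _ _).1 (hxsB a ha).2
    refine ⟨⟨xs, hxsY⟩, fun a ha => ?_⟩
    obtain ⟨a', ha', h1, h2⟩ := hsucc a ha
    have hxa' : Phi v f a'.1 ≤ v (Jm f b).det + minVal v (xs - a'.1) := by
      exact (hmemcb _ _ _).1 (hxsB a' ha').1
    have hkey2 : Phi v f a'.1 ≤ Phi v f xs :=
      key hv hf hb hN hxsY a'.2 (phiY hv hf hb hN a'.2) hxa'
    have hxa : Phi v f a.1 ≤ v (Jm f b).det + minVal v (xs - a.1) := by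
      exact (hmemcb _ _ _).1 (hxsB a ha).1
    exact Or.inr ⟨lt_of_lt_of_le h1 hkey2, hxa⟩
  obtain ⟨mx, hmx⟩ := exists_maximal_of_chains_bounded hchain fun h1 h2 => htrans h1 h2
  refine ⟨mx.1, mx.2, ?_⟩
  by_contra hfx
  obtain ⟨hzY, hlt⟩ := step hv hf hb hN mx.2 hfx
  have hr1 : r mx ⟨mx.1 - eps f mx.1, hzY⟩ := by
    refine Or.inr ⟨hlt, ?_⟩
    rw [show mx.1 - eps f mx.1 - mx.1 = -(eps f mx.1) from by ring, minVal_neg hv]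
    exact le_of_eq (veps hv hf hb hN mx.2).symm
  rcases hmx _ hr1 with heq2 | ⟨h1, _⟩
  · have h3 : mx.1 - eps f mx.1 = mx.1 := congrArg Subtype.val heq2
    rw [h3] at hlt
    exact lt_irrefl _ hlt
  · exact absurd hlt (not_lt.2 (le_of_lt h1))

end Exist
end NewtonAux
namespace NewtonAux
section Final

open MvPolynomial

variable {K : Type*} [Field K] {Γ : Type*} [AddCommGroup Γ] [LinearOrder Γ] [IsOrderedAddMonoid Γ]
  {n : ℕ} {v : K → WithTop Γ} {f : Fin n → MvPolynomial (Fin n) K} {b : Fin n → K}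
  (hv : IsFieldVal v) (hf : ∀ i m, 0 ≤ v (MvPolynomial.coeff m (f i)))
  (hb : ∀ i, 0 ≤ v (b i))
  (hN : v (Jm f b).det + v (Jm f b).det < minVal v (fvv f b))

include hv hf hb hN

theorem val_id {a : Fin n → K} (ha : a ∈ Ynewt v f b) (hfa : fvv f a = 0) :
    minVal v (a - b) + v (Jm f b).det = Phi v f b := by
  by_cases hγ : Phi v f b = ⊤
  · have h1 : minVal v (a - b) = ⊤ := by
      have h2 : (⊤ : WithTop Γ) ≤ v (Jm f b).det + minVal v (a - b) := hγ ▸ ha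
      rcases WithTop.add_eq_top.1 (top_le_iff.1 h2) with h | h
      · exact absurd h (vd_ne hv hf hb hN)
      · exact h
    rw [h1, hγ, top_add]
  have hmtop : minVal v (a - b) ≠ ⊤ := by
    intro h
    have hab : a = b := (minVal_sub_top_iff hv).1 h
    exact hγ ((phi_top_iff hv hf hb hN (bY hv hf hb hN)).2 (hab ▸ hfa))
  have hvdm := Y_gap hv hf hb hN ha
  have hint : ∀ i, 0 ≤ v ((a - b) i) := fun i => Y_sub_int hv hf hb hN ha i
  set Qv : Fin n → K := fun i => Rem b (a - b) (f i) with hQv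
  have hzero : fvv f b + (Jm f b).mulVec (a - b) + Qv = 0 := by
    rw [← tay, hfa]
  have hadj : (Jm f b).adjugate.mulVec (fvv f b) =
      (-(Jm f b).det) • (a - b) + -((Jm f b).adjugate.mulVec Qv) := by
    have h0 := congrArg (fun w => (Jm f b).adjugate.mulVec w) hzero
    simp only [Matrix.mulVec_add, Matrix.mulVec_zero, Matrix.mulVec_mulVec,
      Matrix.adjugate_mul, Matrix.smul_mulVec, Matrix.one_mulVec] at h0
    have h2 := eq_sub_of_add_eq (eq_neg_of_add_eq_zero_left h0)
    rw [h2, neg_smul]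
    abel
  have hlhs : minVal v ((-(Jm f b).det) • (a - b)) =
      v (Jm f b).det + minVal v (a - b) := by
    rw [minVal_smul hv, vneg hv]
  have hrhs : minVal v ((-(Jm f b).det) • (a - b)) <
      minVal v (-((Jm f b).adjugate.mulVec Qv)) := by
    rw [hlhs, minVal_neg hv]
    have hQb : minVal v (a - b) + minVal v (a - b) ≤ minVal v Qv :=
      le_minVal fun i => rem_bound hv (hf i) hb hint
    have hAQ := minVal_mulVec hv (c := 0) (vadj hv (Jm_int hv hf hb)) Qv
    rw [zero_add] at hAQ
    calc v (Jm f b).det + minVal v (a - b)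
        < minVal v (a - b) + minVal v (a - b) := WithTop.add_lt_add_right hmtop hvdm
      _ ≤ minVal v Qv := hQb
      _ ≤ _ := hAQ
  have hPhi : Phi v f b = v (Jm f b).det + minVal v (a - b) := by
    rw [Phi, hadj, minVal_add_eq hv hrhs, hlhs]
  rw [hPhi, add_comm]

theorem uniq {a : Fin n → K} (ha : a ∈ Ynewt v f b) (hfa : fvv f a = 0)
    {a' : Fin n → K} (ha'int : ∀ i, 0 ≤ v (a' i)) (hfa' : fvv f a' = 0)
    (ha'gt : v (Jm f b).det < minVal v (a' - b)) : a' = a := by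
  by_contra hne
  have hmtop : minVal v (a' - a) ≠ ⊤ := fun h => hne ((minVal_sub_top_iff hv).1 h)
  have haint := Y_int hv hf hb hN ha
  have hint : ∀ i, 0 ≤ v ((a' - a) i) := fun i => by
    rw [Pi.sub_apply]
    exact le_trans (le_min (ha'int i) (haint i)) (hv.2.2 _ _)
  have hμgt : v (Jm f b).det < minVal v (a' - a) := by
    have h1 : min (minVal v (a' - b)) (minVal v (b - a)) ≤ minVal v (a' - a) :=
      minVal_tri hv a' b a
    have h2 : v (Jm f b).det < minVal v (b - a) := by
      rw [minVal_sub_comm hv]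
      exact Y_gap hv hf hb hN ha
    exact lt_of_lt_of_le (lt_min ha'gt h2) h1
  set Qv : Fin n → K := fun i => Rem a (a' - a) (f i) with hQv
  have h0 : (Jm f a).mulVec (a' - a) + Qv = 0 := by
    have htay := tay (f := f) a a'
    rw [hfa', hfa, zero_add] at htay
    exact htay.symm
  have hdet : (Jm f a).det • (a' - a) = -((Jm f a).adjugate.mulVec Qv) := by
    have h1 := congrArg (fun w => (Jm f a).adjugate.mulVec w) h0
    simp only [Matrix.mulVec_add, Matrix.mulVec_zero, Matrix.mulVec_mulVec,
      Matrix.adjugate_mul, Matrix.smul_mulVec, Matrix.one_mulVec] at h1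
    exact eq_neg_of_add_eq_zero_left h1
  have hL : minVal v ((Jm f a).det • (a' - a)) =
      v (Jm f b).det + minVal v (a' - a) := by
    rw [minVal_smul hv, det_eq hv hf hb hN ha]
  have hR : minVal v (a' - a) + minVal v (a' - a) ≤
      minVal v (-((Jm f a).adjugate.mulVec Qv)) := by
    rw [minVal_neg hv]
    have hQb : minVal v (a' - a) + minVal v (a' - a) ≤ minVal v Qv :=
      le_minVal fun i => rem_bound hv (hf i) haint hint
    have hAQ := minVal_mulVec hv (c := 0) (vadj hv (Jm_int hv hf haint)) Qv
    rw [zero_add] at hAQ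
    exact le_trans hQb hAQ
  have hcontra : v (Jm f b).det + minVal v (a' - a) <
      v (Jm f b).det + minVal v (a' - a) :=
    calc v (Jm f b).det + minVal v (a' - a)
        < minVal v (a' - a) + minVal v (a' - a) := WithTop.add_lt_add_right hmtop hμgt
      _ ≤ minVal v (-((Jm f a).adjugate.mulVec Qv)) := hR
      _ = minVal v ((Jm f a).det • (a' - a)) := by rw [hdet]
      _ = _ := hL
  exact absurd hcontra (lt_irrefl _)

end Final
end NewtonAux
/-- multidimensional Newton's Lemma in a spherically complete valued
field. -/
theorem multidim_newtons_lemma {K : Type*} [Field K] {Γ : Type*}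
    [AddCommGroup Γ] [LinearOrder Γ] [IsOrderedAddMonoid Γ] (v : K → WithTop Γ) (hv : IsFieldVal v)
    (hsc : SphericallyComplete (fun a b : K => v (a - b)))
    {n : ℕ} (f : Fin n → MvPolynomial (Fin n) K)
    (hf : ∀ i m, 0 ≤ v (MvPolynomial.coeff m (f i)))
    (b : Fin n → K) (hb : ∀ i, 0 ≤ v (b i))
    (J : Matrix (Fin n) (Fin n) K)
    (hJ : J = Matrix.of fun i j => MvPolynomial.eval b (MvPolynomial.pderiv j (f i)))
    (hnewton : v J.det + v J.det < minVal v fun i => MvPolynomial.eval b (f i)) :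
    ∃! a : Fin n → K, (∀ i, 0 ≤ v (a i)) ∧ (∀ i, MvPolynomial.eval a (f i) = 0) ∧
      v J.det < minVal v (a - b) ∧
      minVal v (a - b) + v J.det =
        minVal v (J.adjugate.mulVec fun i => MvPolynomial.eval b (f i)) := by
  classical
  subst hJ
  have hN : v (NewtonAux.Jm f b).det + v (NewtonAux.Jm f b).det <
      minVal v (NewtonAux.fvv f b) := hnewton
  obtain ⟨a, haY, hfa⟩ := NewtonAux.exists_root hv hf hb hN hsc
  refine ⟨a, ⟨NewtonAux.Y_int hv hf hb hN haY, fun i => congrFun hfa i,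
    NewtonAux.Y_gap hv hf hb hN haY, NewtonAux.val_id hv hf hb hN haY hfa⟩, ?_⟩
  rintro a' ⟨h1, h2, h3, _⟩
  exact NewtonAux.uniq hv hf hb hN haY hfa h1 (funext h2) h3
end

section
/- Let k be a field, G an ordered abelian group, M the valuation ideal of the power series field k((G)) with canonical valuation, and f(X) = Σ_{i≥1} c_i X^i ∈ k[[X]] a power series with c_1 ≠ 0. Then the induced map f : M → M is a bijection, and indeed an isomorphism of ultrametric spaces (pseudo-linear with pseudo-slope c_1). -/
open HahnSeries

namespace Statement17

variable {k : Type*} [Field k] {G : Type*} [AddCommGroup G] [LinearOrder G] [IsOrderedAddMonoid G]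

lemma le_orderTop_of {x : HahnSeries G k} {r : G} (h : ∀ g < r, x.coeff g = 0) :
    (r : WithTop G) ≤ x.orderTop := by
  rcases eq_or_ne x 0 with rfl | hx
  · simp
  · rw [← order_eq_orderTop_of_ne_zero hx, WithTop.coe_le_coe]
    by_contra hlt
    exact (coeff_order_eq_zero.not.mpr hx) (h _ (not_le.mp hlt))

lemma lt_orderTop_of {x : HahnSeries G k} {r : G} (h : ∀ g ≤ r, x.coeff g = 0) :
    (r : WithTop G) < x.orderTop := by
  rcases eq_or_ne x 0 with rfl | hx
  · simp [lt_top_iff_ne_top]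
  · rw [← order_eq_orderTop_of_ne_zero hx, WithTop.coe_lt_coe]
    by_contra hlt
    exact (coeff_order_eq_zero.not.mpr hx) (h _ (not_lt.mp hlt))

lemma orderTop_smul_eq {c : k} (hc : c ≠ 0) (x : HahnSeries G k) :
    (c • x).orderTop = x.orderTop := by
  refine le_antisymm ?_ (not_lt.mp (orderTop_smul_not_lt c x))
  have h2 := not_lt.mp (orderTop_smul_not_lt c⁻¹ (c • x))
  rwa [smul_smul, inv_mul_cancel₀ hc, one_smul] at h2

lemma zero_le_orderTop_pow {y : HahnSeries G k} (hy : 0 < y.orderTop) (i : ℕ) :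
    0 ≤ (y ^ i).orderTop := by
  induction i with
  | zero => simp [orderTop_one]
  | succ n ih =>
      have := orderTop_add_le_mul (x := y ^ n) (y := y)
      rw [pow_succ]
      refine le_trans ?_ this
      calc (0 : WithTop G) = 0 + 0 := (add_zero 0).symm
        _ ≤ (y ^ n).orderTop + y.orderTop := add_le_add ih hy.le

lemma wt_add_pos {a b : WithTop G} (ha : 0 ≤ a) (hb : 0 < b) : 0 < a + b := by
  induction a with
  | top => rw [top_add]; exact lt_top_iff_ne_top.mpr (by exact_mod_cast WithTop.coe_ne_top (a := (0:G)))
  | coe a =>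
      induction b with
      | top => rw [add_top]; exact lt_top_iff_ne_top.mpr (by exact_mod_cast WithTop.coe_ne_top (a := (0:G)))
      | coe b =>
          rw [← WithTop.coe_add]
          exact_mod_cast add_pos_of_nonneg_of_pos (by exact_mod_cast ha) (by exact_mod_cast hb)

lemma zero_lt_orderTop_pow {y : HahnSeries G k} (hy : 0 < y.orderTop) {i : ℕ} (hi : i ≠ 0) :
    0 < (y ^ i).orderTop := by
  obtain ⟨n, rfl⟩ := Nat.exists_eq_succ_of_ne_zero hi
  have := orderTop_add_le_mul (x := y ^ n) (y := y)
  rw [pow_succ]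
  exact lt_of_lt_of_le (wt_add_pos (zero_le_orderTop_pow hy n) hy) this

lemma lt_add_left' {a b : WithTop G} (ha : a ≠ ⊤) (hb : 0 < b) : a < b + a := by
  lift a to G using ha
  induction b with
  | top => simp [top_add]
  | coe b =>
      rw [← WithTop.coe_add, WithTop.coe_lt_coe]
      have hb' : (0 : G) < b := by exact_mod_cast hb
      exact lt_add_of_pos_left a hb'

lemma orderTop_sum_pos {ι : Type*} {s : Finset ι} {h : ι → HahnSeries G k}
    (hh : ∀ i ∈ s, 0 < (h i).orderTop) : 0 < (∑ i ∈ s, h i).orderTop := by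
  classical
  induction s using Finset.cons_induction with
  | empty => simp [lt_top_iff_ne_top]
  | cons a s ha ih =>
      rw [Finset.sum_cons]
      refine lt_of_lt_of_le (lt_min (hh a (Finset.mem_cons_self a s)) ?_)
        min_orderTop_le_orderTop_add
      exact ih fun i hi => hh i (Finset.mem_cons_of_mem hi)

def smulFam (c : ℕ → k) (s : SummableFamily G k ℕ) : SummableFamily G k ℕ where
  toFun n := c n • s n
  isPWO_iUnion_support' := by
    refine s.isPWO_iUnion_support.mono (Set.iUnion_mono fun n g hg => ?_)
    simp only [HahnSeries.mem_support, HahnSeries.coeff_smul, smul_eq_mul] at hg ⊢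
    exact fun h => hg (by rw [h, mul_zero])
  finite_co_support' g := by
    refine (s.finite_co_support g).subset fun n hn => ?_
    simp only [Function.mem_support, HahnSeries.coeff_smul, smul_eq_mul] at hn ⊢
    exact fun h => hn (by rw [h, mul_zero])

@[simp] lemma smulFam_apply (c : ℕ → k) (s : SummableFamily G k ℕ) (n : ℕ) :
    smulFam c s n = c n • s n := rfl

variable (f : PowerSeries k) (F : HahnSeries G k → HahnSeries G k)
variable (hF : ∀ y : HahnSeries G k, 0 < (HahnSeries.addVal G k) y → ∀ g : G,
      (F y).coeff g = ∑ᶠ i : ℕ, PowerSeries.coeff i f * (y ^ i).coeff g)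

include hF in
lemma F_eq {y : HahnSeries G k} (hy : 0 < y.orderTop) :
    F y = (smulFam (fun i => PowerSeries.coeff i f) (SummableFamily.powers y)).hsum := by
  ext g
  rw [SummableFamily.coeff_hsum, hF y (by rw [addVal_apply]; exact hy) g]
  exact finsum_congr fun i => by
    simp [hy, HahnSeries.coeff_smul, smul_eq_mul]

include hF in
lemma F_mem (h0 : PowerSeries.coeff 0 f = 0) {y : HahnSeries G k} (hy : 0 < y.orderTop) :
    0 < (F y).orderTop := by
  rw [F_eq f F hF hy]
  have hco : ∀ g : G, g ≤ 0 →
      ((smulFam (fun i => PowerSeries.coeff i f) (SummableFamily.powers y)).hsum).coeff g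
        = 0 := by
    intro g hg
    rw [SummableFamily.coeff_hsum]
    refine finsum_eq_zero_of_forall_eq_zero fun i => ?_
    rcases eq_or_ne i 0 with rfl | hi
    · simp [h0]
    · refine coeff_eq_zero_of_lt_orderTop ?_
      refine lt_of_le_of_lt (show (g : WithTop G) ≤ 0 from by exact_mod_cast hg) ?_
      refine lt_of_lt_of_le (zero_lt_orderTop_pow hy hi) ?_
      simpa [hy] using not_lt.mp (orderTop_smul_not_lt (PowerSeries.coeff i f) (y ^ i))
  have := lt_orderTop_of (x := (smulFam (fun i => PowerSeries.coeff i f)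
    (SummableFamily.powers y)).hsum) (r := (0 : G)) (fun g hg => hco g hg)
  simpa using this

lemma pow_sub_pow_orderTop {y z : HahnSeries G k} (hy : 0 < y.orderTop) (hz : 0 < z.orderTop)
    (hne : y ≠ z) {i : ℕ} (hi : i ≠ 1) :
    (y - z).orderTop < (y ^ i - z ^ i).orderTop := by
  have hvne : (y - z).orderTop ≠ ⊤ := by
    rw [ne_eq, orderTop_eq_top, sub_eq_zero]; exact hne
  match i, hi with
  | 0, _ => simpa [sub_self] using lt_top_iff_ne_top.mpr hvne
  | (n+2), _ =>
      set S : HahnSeries G k := ∑ j ∈ Finset.range (n + 2), y ^ j * z ^ (n + 2 - 1 - j) with hS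
      have hfact : S * (y - z) = y ^ (n + 2) - z ^ (n + 2) := geom_sum₂_mul y z (n + 2)
      have hSpos : 0 < S.orderTop := by
        refine orderTop_sum_pos fun j hj => ?_
        refine lt_of_lt_of_le ?_ (orderTop_add_le_mul (x := y ^ j)
          (y := z ^ (n + 2 - 1 - j)))
        rcases eq_or_ne j 0 with rfl | hj0
        · have : (n + 2 - 1 - 0) ≠ 0 := by omega
          calc (0 : WithTop G) < (z ^ (n + 2 - 1 - 0)).orderTop := zero_lt_orderTop_pow hz this
            _ = 0 + (z ^ (n + 2 - 1 - 0)).orderTop := (zero_add _).symm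
            _ ≤ (y ^ 0).orderTop + (z ^ (n + 2 - 1 - 0)).orderTop :=
                add_le_add (zero_le_orderTop_pow hy 0) le_rfl
        · rw [show (0 : WithTop G) = 0 + 0 from (add_zero 0).symm]
          -- 0 + 0 < pos + nonneg
          have h1 : 0 < (y ^ j).orderTop := zero_lt_orderTop_pow hy hj0
          have h2 : 0 ≤ (z ^ (n + 2 - 1 - j)).orderTop := zero_le_orderTop_pow hz _
          calc (0 : WithTop G) + 0 = 0 := add_zero 0
            _ < (y ^ j).orderTop + (z ^ (n + 2 - 1 - j)).orderTop := by
                rw [add_comm (y ^ j).orderTop]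
                exact wt_add_pos h2 h1
      calc (y - z).orderTop < S.orderTop + (y - z).orderTop := lt_add_left' hvne hSpos
        _ ≤ (S * (y - z)).orderTop := orderTop_add_le_mul
        _ = (y ^ (n+2) - z ^ (n+2)).orderTop := by rw [hfact]

include hF in
lemma key (h1 : PowerSeries.coeff 1 f ≠ 0) {y z : HahnSeries G k}
    (hy : 0 < y.orderTop) (hz : 0 < z.orderTop) (hne : y ≠ z) :
    (F y - F z).orderTop = (y - z).orderTop ∧
    (y - z).orderTop <
      (F y - F z - HahnSeries.C (PowerSeries.coeff 1 f) * (y - z)).orderTop := by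
  classical
  set c : ℕ → k := fun i => PowerSeries.coeff i f with hc
  set d : SummableFamily G k ℕ :=
    smulFam c (SummableFamily.powers y) - smulFam c (SummableFamily.powers z) with hdd
  have hFyz : F y - F z = d.hsum := by
    rw [F_eq f F hF hy, F_eq f F hF hz, hdd, SummableFamily.hsum_sub]
  have hd : ∀ i : ℕ, d i = c i • (y ^ i - z ^ i) := by
    intro i
    rw [hdd, SummableFamily.sub_apply, smulFam_apply, smulFam_apply, smul_sub]
    rw [SummableFamily.powers_of_orderTop_pos hy, SummableFamily.powers_of_orderTop_pos hz]
  have hvne : (y - z).orderTop ≠ ⊤ := by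
    rw [ne_eq, orderTop_eq_top, sub_eq_zero]; exact hne
  have hdlt : ∀ i : ℕ, i ≠ 1 → (y - z).orderTop < (d i).orderTop := by
    intro i hi
    refine lt_of_lt_of_le (pow_sub_pow_orderTop hy hz hne hi) ?_
    rw [hd i]
    exact not_lt.mp (orderTop_smul_not_lt (c i) (y ^ i - z ^ i))
  have hE : ∀ g : G, (g : WithTop G) ≤ (y - z).orderTop →
      (F y - F z - HahnSeries.C (c 1) * (y - z)).coeff g = 0 := by
    intro g hg
    rw [coeff_sub, hFyz, SummableFamily.coeff_hsum,
      finsum_eq_single _ 1 (fun i hi =>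
        coeff_eq_zero_of_lt_orderTop (lt_of_le_of_lt hg (hdlt i hi))),
      hd 1, C_mul_eq_smul]
    simp
  obtain ⟨r, hr⟩ := WithTop.ne_top_iff_exists.mp hvne
  have h2 : (y - z).orderTop <
      (F y - F z - HahnSeries.C (c 1) * (y - z)).orderTop := by
    rw [← hr]
    exact lt_orderTop_of fun g hg => hE g (by rw [← hr]; exact_mod_cast hg)
  have hC : (HahnSeries.C (c 1) * (y - z)).orderTop = (y - z).orderTop := by
    rw [C_mul_eq_smul]; exact orderTop_smul_eq h1 _
  refine ⟨?_, h2⟩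
  have hsplit : F y - F z =
      HahnSeries.C (c 1) * (y - z) + (F y - F z - HahnSeries.C (c 1) * (y - z)) := by ring
  rw [hsplit, orderTop_add_eq_left (by rw [hC]; exact h2), hC]

/-- Spherical completeness: a nonempty chain of closed balls has a common point. -/
lemma chain_balls_nonempty (S : Set (Set (HahnSeries G k))) (hSne : S.Nonempty)
    (hchain : IsChain (· ⊆ ·) S)
    (a : Set (HahnSeries G k) → HahnSeries G k) (γ : Set (HahnSeries G k) → G)
    (hball : ∀ s ∈ S, s = {z : HahnSeries G k | (γ s : WithTop G) ≤ (z - a s).orderTop}) :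
    ∃ b : HahnSeries G k, ∀ s ∈ S, b ∈ s := by
  classical
  have hmem_self : ∀ s ∈ S, a s ∈ s := by
    intro s hs
    have h : a s ∈ {z : HahnSeries G k | (γ s : WithTop G) ≤ (z - a s).orderTop} := by
      simp only [Set.mem_setOf_eq, sub_self, orderTop_zero, le_top]
    rwa [← hball s hs] at h
  -- coefficients agree below the radius of any containing ball
  have hagree : ∀ s ∈ S, ∀ t ∈ S, ∀ g : G, g < γ s → g < γ t →
      (a s).coeff g = (a t).coeff g := by
    have main : ∀ s ∈ S, ∀ t ∈ S, s ⊆ t → ∀ g : G, g < γ t →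
        (a s).coeff g = (a t).coeff g := by
      intro s hs t ht hsub g hg
      have : a s ∈ t := hsub (hmem_self s hs)
      rw [hball t ht] at this
      have hz : (a s - a t).coeff g = 0 :=
        coeff_eq_zero_of_lt_orderTop (lt_of_lt_of_le (WithTop.coe_lt_coe.mpr hg) this)
      rw [coeff_sub] at hz
      exact sub_eq_zero.mp hz
    intro s hs t ht g hgs hgt
    rcases eq_or_ne s t with rfl | hst
    · rfl
    · rcases hchain hs ht hst with h | h
      · exact main s hs t ht h g hgt
      · exact (main t ht s hs h g hgs).symm
  set P : G → Prop := fun g => ∃ s, s ∈ S ∧ g < γ s with hP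
  set bc : G → k := fun g => if h : P g then (a h.choose).coeff g else 0 with hbc
  have hbc_eq : ∀ s ∈ S, ∀ g : G, g < γ s → bc g = (a s).coeff g := by
    intro s hs g hg
    have hPg : P g := ⟨s, hs, hg⟩
    rw [hbc]
    simp only [dif_pos hPg]
    exact hagree _ hPg.choose_spec.1 s hs g hPg.choose_spec.2 hg
  have hsupp : (Function.support bc).IsPWO := by
    rw [Set.isPWO_iff_isWF, Set.isWF_iff_no_descending_seq]
    intro φ hφ hmem
    have h0 : bc (φ 0) ≠ 0 := hmem 0
    have hP0 : P (φ 0) := by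
      by_contra hnp
      rw [hbc] at h0
      simp only [dif_neg hnp] at h0
      exact h0 rfl
    obtain ⟨s₀, hs₀, hγ₀⟩ := hP0
    have : ∀ n, φ n ∈ (a s₀).support := by
      intro n
      have hlt : φ n < γ s₀ := by
        rcases eq_or_ne n 0 with rfl | hn
        · exact hγ₀
        · exact lt_trans (hφ (Nat.pos_of_ne_zero hn)) hγ₀
      have := hbc_eq s₀ hs₀ (φ n) hlt
      rw [HahnSeries.mem_support, ← this]
      exact hmem n
    exact Set.isWF_iff_no_descending_seq.mp (a s₀).isWF_support φ hφ this
  set b : HahnSeries G k := ⟨bc, hsupp⟩ with hb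
  refine ⟨b, fun s hs => ?_⟩
  rw [hball s hs]
  refine le_orderTop_of fun g hg => ?_
  rw [coeff_sub]
  have : b.coeff g = bc g := rfl
  rw [this, hbc_eq s hs g hg, sub_self]

lemma exists_fixed_point (T : HahnSeries G k → HahnSeries G k)
    (hmaps : ∀ y : HahnSeries G k, 0 < y.orderTop → 0 < (T y).orderTop)
    (hcontr : ∀ y z : HahnSeries G k, 0 < y.orderTop → 0 < z.orderTop → y ≠ z →
      (y - z).orderTop < (T y - T z).orderTop) :
    ∃ y : HahnSeries G k, 0 < y.orderTop ∧ T y = y := by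
  classical
  by_contra hno
  push_neg at hno
  -- radius of the ball at y
  set ρ : HahnSeries G k → G := fun y => (T y - y).order with hρdef
  have hρ : ∀ y : HahnSeries G k, 0 < y.orderTop →
      (ρ y : WithTop G) = (T y - y).orderTop ∧ (0 : WithTop G) < (ρ y : WithTop G) := by
    intro y hy
    have hne : T y - y ≠ 0 := sub_ne_zero.mpr (hno y hy)
    constructor
    · exact order_eq_orderTop_of_ne_zero hne
    · rw [order_eq_orderTop_of_ne_zero hne]
      exact lt_of_lt_of_le (lt_min (hmaps y hy) hy) min_orderTop_le_orderTop_sub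
  set ball : HahnSeries G k → Set (HahnSeries G k) :=
    fun y => {z | (ρ y : WithTop G) ≤ (z - y).orderTop} with hballdef
  have hself : ∀ y : HahnSeries G k, y ∈ ball y := by
    intro y; simp [hballdef]
  have hmemM : ∀ y z : HahnSeries G k, 0 < y.orderTop → z ∈ ball y → 0 < z.orderTop := by
    intro y z hy hzy
    have h1 : min (z - y).orderTop y.orderTop ≤ (z - y + y).orderTop :=
      min_orderTop_le_orderTop_add
    rw [sub_add_cancel] at h1
    exact lt_of_lt_of_le (lt_min (lt_of_lt_of_le (hρ y hy).2 hzy) hy) h1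
  have hmono : ∀ y z : HahnSeries G k, 0 < y.orderTop → z ∈ ball y → ball z ⊆ ball y := by
    intro y z hy hzy
    have hz : 0 < z.orderTop := hmemM y z hy hzy
    rcases eq_or_ne z y with rfl | hne
    · exact subset_rfl
    have hzy' : (ρ y : WithTop G) ≤ (z - y).orderTop := hzy
    have hρle : (ρ y : WithTop G) ≤ (ρ z : WithTop G) := by
      rw [(hρ z hz).1]
      have hTzy : (ρ y : WithTop G) ≤ (T z - T y).orderTop :=
        le_of_lt (lt_of_le_of_lt hzy' (hcontr z y hz hy hne))
      have hTyy : (ρ y : WithTop G) ≤ (T y - y).orderTop := le_of_eq (hρ y hy).1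
      have hyz : (ρ y : WithTop G) ≤ (y - z).orderTop := by
        rw [show y - z = -(z - y) by ring, orderTop_neg]; exact hzy'
      have e1 : T z - z = T z - T y + (T y - y + (y - z)) := by ring
      rw [e1]
      refine le_trans (le_min hTzy (le_trans (le_min hTyy hyz)
        min_orderTop_le_orderTop_add)) min_orderTop_le_orderTop_add
    intro w hwz
    have hwz' : (ρ z : WithTop G) ≤ (w - z).orderTop := hwz
    have e2 : w - y = w - z + (z - y) := by ring
    show (ρ y : WithTop G) ≤ (w - y).orderTop
    rw [e2]
    exact le_trans (le_min (le_trans hρle hwz') hzy') min_orderTop_le_orderTop_add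
  set S : Set (Set (HahnSeries G k)) :=
    {s | ∃ y : HahnSeries G k, 0 < y.orderTop ∧ s = ball y} with hSdef
  have hzero : (0 : HahnSeries G k).orderTop > 0 := by
    rw [orderTop_zero, ← WithTop.coe_zero]
    exact WithTop.coe_lt_top 0
  have hchains : ∀ c ⊆ S, IsChain (· ⊆ ·) c → c.Nonempty →
      ∃ lb ∈ S, ∀ s ∈ c, lb ⊆ s := by
    intro c hcS hchain hcne
    set a : Set (HahnSeries G k) → HahnSeries G k :=
      fun s => if h : s ∈ S then h.choose else 0 with hadef
    have ha : ∀ s ∈ c, 0 < (a s).orderTop ∧ s = ball (a s) := by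
      intro s hsc
      have hsS : s ∈ S := hcS hsc
      rw [hadef]
      simp only [dif_pos hsS]
      exact ⟨hsS.choose_spec.1, hsS.choose_spec.2⟩
    obtain ⟨b, hb⟩ := chain_balls_nonempty c hcne hchain a (fun s => ρ (a s))
      (fun s hsc => by nth_rewrite 1 [(ha s hsc).2]; rfl)
    obtain ⟨s₁, hs₁⟩ := hcne
    have hbM : 0 < b.orderTop := by
      have := hb s₁ hs₁
      rw [(ha s₁ hs₁).2] at this
      exact hmemM _ _ (ha s₁ hs₁).1 this
    refine ⟨ball b, ⟨b, hbM, rfl⟩, fun s hsc => ?_⟩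
    have hbs : b ∈ ball (a s) := by rw [← (ha s hsc).2]; exact hb s hsc
    rw [(ha s hsc).2]
    exact hmono (a s) b (ha s hsc).1 hbs
  obtain ⟨m, _, hmin⟩ := zorn_superset_nonempty S hchains (ball 0) ⟨0, hzero, rfl⟩
  · obtain ⟨y₀, hy₀, rfl⟩ := hmin.prop
    set z := T y₀ with hzdef
    have hz : 0 < z.orderTop := hmaps y₀ hy₀
    have hzball : z ∈ ball y₀ := by
      show (ρ y₀ : WithTop G) ≤ (z - y₀).orderTop
      exact le_of_eq (hρ y₀ hy₀).1
    have hsub : ball z ⊆ ball y₀ := hmono y₀ z hy₀ hzball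
    have heq : ball y₀ ⊆ ball z := hmin.2 ⟨z, hz, rfl⟩ hsub
    have hy₀z : y₀ ∈ ball z := heq (hself y₀)
    have h1 : (ρ z : WithTop G) ≤ (y₀ - z).orderTop := hy₀z
    have h2 : (y₀ - z).orderTop = (ρ y₀ : WithTop G) := by
      rw [show y₀ - z = -(z - y₀) by ring, orderTop_neg, ← (hρ y₀ hy₀).1]
    have h3 : (ρ y₀ : WithTop G) < (ρ z : WithTop G) := by
      rw [(hρ z hz).1]
      show _ < (T (T y₀) - T y₀).orderTop
      rw [(hρ y₀ hy₀).1]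
      exact hcontr (T y₀) y₀ (hmaps y₀ hy₀) hy₀ (hno y₀ hy₀)
    rw [h2] at h1
    exact absurd (lt_of_le_of_lt h1 h3) (lt_irrefl _)

include hF in
lemma F_surj (h0 : PowerSeries.coeff 0 f = 0) (h1 : PowerSeries.coeff 1 f ≠ 0)
    {w : HahnSeries G k} (hw : 0 < w.orderTop) :
    ∃ y : HahnSeries G k, 0 < y.orderTop ∧ F y = w := by
  classical
  set c1 : k := PowerSeries.coeff 1 f with hc1
  set u : HahnSeries G k := HahnSeries.C c1⁻¹ with hu
  have huc : u * HahnSeries.C c1 = 1 := by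
    rw [hu, ← map_mul, inv_mul_cancel₀ h1, map_one]
  set T : HahnSeries G k → HahnSeries G k := fun y => y + u * (w - F y) with hT
  have huX : ∀ x : HahnSeries G k, (u * x).orderTop = x.orderTop := by
    intro x
    rw [hu, C_mul_eq_smul]
    exact orderTop_smul_eq (inv_ne_zero h1) x
  have hmaps : ∀ y : HahnSeries G k, 0 < y.orderTop → 0 < (T y).orderTop := by
    intro y hy
    have h2 : 0 < (w - F y).orderTop :=
      lt_of_lt_of_le (lt_min hw (F_mem f F hF h0 hy)) min_orderTop_le_orderTop_sub
    refine lt_of_lt_of_le (lt_min hy ?_) min_orderTop_le_orderTop_add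
    rw [huX]
    exact h2
  have hcontr : ∀ y z : HahnSeries G k, 0 < y.orderTop → 0 < z.orderTop → y ≠ z →
      (y - z).orderTop < (T y - T z).orderTop := by
    intro y z hy hz hne
    have hkey := (key f F hF h1 hy hz hne).2
    have hTyz : T y - T z = -(u * (F y - F z - HahnSeries.C c1 * (y - z))) := by
      rw [hT]
      simp only
      linear_combination (-(y - z)) * huc
    rw [hTyz, orderTop_neg, huX]
    exact hkey
  obtain ⟨y, hy, hTy⟩ := exists_fixed_point T hmaps hcontr
  refine ⟨y, hy, ?_⟩
  have : u * (w - F y) = 0 := by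
    have h2 : y + u * (w - F y) = y := hTy
    linear_combination h2
  have hune : u ≠ 0 := by
    rw [hu]
    exact C_ne_zero (inv_ne_zero h1)
  rcases mul_eq_zero.mp this with h | h
  · exact absurd h hune
  · rw [sub_eq_zero] at h
    exact h.symm

end Statement17


/-- for a power series `f = Σ_{i≥1} c_i Xⁱ` over `k` with `c₁ ≠ 0`, the
induced map `F` on the valuation ideal `M` of the power series (Hahn series) field
`k((G))` (characterized coefficientwise: `(F y).coeff g = Σᶠ_i c_i · (yⁱ).coeff g`) is a
bijection of `M` onto itself, and indeed pseudo-linear with pseudo-slope `c₁` (hence an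
isomorphism of ultrametric spaces). -/
theorem powerSeries_map_bijective {k : Type*} [Field k] {G : Type*}
    [AddCommGroup G] [LinearOrder G] [IsOrderedAddMonoid G]
    (f : PowerSeries k)
    (h0 : PowerSeries.coeff 0 f = 0) (h1 : PowerSeries.coeff 1 f ≠ 0)
    (F : HahnSeries G k → HahnSeries G k)
    (hF : ∀ y : HahnSeries G k, 0 < (HahnSeries.addVal G k) y → ∀ g : G,
      (F y).coeff g = ∑ᶠ i : ℕ, PowerSeries.coeff i f * (y ^ i).coeff g) :
    Set.BijOn F {y : HahnSeries G k | 0 < (HahnSeries.addVal G k) y}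
      {y : HahnSeries G k | 0 < (HahnSeries.addVal G k) y} ∧
    ∀ y ∈ {y : HahnSeries G k | 0 < (HahnSeries.addVal G k) y},
      ∀ z ∈ {y : HahnSeries G k | 0 < (HahnSeries.addVal G k) y}, y ≠ z →
        (HahnSeries.addVal G k) (F y - F z) = (HahnSeries.addVal G k) (y - z) ∧
        (HahnSeries.addVal G k) (y - z) <
          (HahnSeries.addVal G k)
            (F y - F z - HahnSeries.C (PowerSeries.coeff 1 f) * (y - z)) := by
  constructor
  · refine ⟨fun y hy => ?_, fun y hy z hz hFyz => ?_, fun w hw => ?_⟩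
    · simp only [Set.mem_setOf_eq, HahnSeries.addVal_apply] at hy ⊢
      exact Statement17.F_mem f F hF h0 hy
    · simp only [Set.mem_setOf_eq, HahnSeries.addVal_apply] at hy hz
      by_contra hne
      have hk := (Statement17.key f F hF h1 hy hz hne).1
      rw [hFyz, sub_self, HahnSeries.orderTop_zero] at hk
      exact hne (sub_eq_zero.mp (HahnSeries.orderTop_eq_top.mp hk.symm))
    · simp only [Set.mem_setOf_eq, HahnSeries.addVal_apply] at hw
      obtain ⟨y, hy, hFy⟩ := Statement17.F_surj f F hF h0 h1 hw
      exact ⟨y, by simpa [HahnSeries.addVal_apply] using hy, hFy⟩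
  · intro y hy z hz hne
    simp only [Set.mem_setOf_eq, HahnSeries.addVal_apply] at hy hz
    simp only [HahnSeries.addVal_apply]
    exact Statement17.key f F hF h1 hy hz hne
end

section
/- Let A_1,…,A_n be spherically complete subgroups of a valued abelian group (𝒜,v). If the sum A_1 + … + A_n is pseudo-direct, then it is spherically complete and has the optimal approximation property. Moreover, the sum is pseudo-direct if and only if the addition homomorphism f : A_1 × … × A_n → A_1 + … + A_n, (a_1,…,a_n) ↦ a_1+…+a_n (with minimum valuation on the product), is immediate. -/
section Aux1

variable {Y Y' : Type*} {Γ Γ' : Type*} [LinearOrder Γ] [OrderTop Γ]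
  [LinearOrder Γ'] [OrderTop Γ']

theorem ball_canonical {u : Y → Y → Γ} (hu : IsUltrametric u) {S : Set Y} (hS : IsBall u S) :
    ∃ c ∈ S, ∀ w z, z ∈ S → u c z ≤ u c w → w ∈ S := by
  obtain ⟨htop, hmin, hsymm⟩ := hu
  obtain ⟨C, ⟨p₀, hp₀⟩, ⟨y₀, hy₀⟩, rfl⟩ := hS
  have tri : ∀ a m b, min (u a m) (u m b) ≤ u a b := fun a m b => hmin m a b
  refine ⟨y₀, Set.mem_biUnion hp₀ (hy₀ _ hp₀), ?_⟩
  intro w z hz hle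
  simp only [Set.mem_iUnion] at hz ⊢
  obtain ⟨p, hp, hpz⟩ := hz
  have h0 : p.1 ≤ u p.2 y₀ := hy₀ p hp
  have h1 : p.1 ≤ u y₀ z := by
    refine le_trans (le_min ?_ hpz) (tri y₀ p.2 z)
    rw [hsymm]; exact h0
  have h2 : p.1 ≤ u y₀ w := le_trans h1 hle
  refine ⟨p, hp, ?_⟩
  exact le_trans (le_min h0 h2) (tri p.2 y₀ w)

theorem isBall_upSet {u : Y → Y → Γ} (hu : IsUltrametric u) (y₀ : Y) {G : Set Γ}
    (hG : G.Nonempty) : IsBall u {z | ∃ γ ∈ G, γ ≤ u y₀ z} := by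
  refine ⟨(fun γ => (γ, y₀)) '' G, hG.image _, ⟨y₀, ?_⟩, ?_⟩
  · rintro p ⟨γ, hγ, rfl⟩
    show γ ≤ u y₀ y₀
    rw [(hu.1 y₀ y₀).2 rfl]; exact le_top
  · ext z
    simp only [Set.mem_setOf_eq, Set.mem_iUnion, Set.mem_image]
    constructor
    · rintro ⟨γ, hγ, h⟩
      exact ⟨(γ, y₀), ⟨γ, hγ, rfl⟩, h⟩
    · rintro ⟨p, ⟨γ, hγ, rfl⟩, h⟩
      exact ⟨γ, hγ, h⟩

theorem ball_upSet_form {u : Y → Y → Γ} (hu : IsUltrametric u) {S : Set Y} (hS : IsBall u S) :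
    ∃ y₀ ∈ S, ∃ G : Set Γ, G.Nonempty ∧ S = {z | ∃ γ ∈ G, γ ≤ u y₀ z} := by
  obtain ⟨htop, hmin, hsymm⟩ := hu
  obtain ⟨C, ⟨p₀, hp₀⟩, ⟨y₀, hy₀⟩, rfl⟩ := hS
  have tri : ∀ a m b, min (u a m) (u m b) ≤ u a b := fun a m b => hmin m a b
  refine ⟨y₀, Set.mem_biUnion hp₀ (hy₀ _ hp₀), Prod.fst '' C, ⟨p₀.1, p₀, hp₀, rfl⟩, ?_⟩
  ext z
  simp only [Set.mem_iUnion, Set.mem_setOf_eq, Set.mem_image]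
  constructor
  · rintro ⟨p, hp, hpz⟩
    refine ⟨p.1, ⟨p, hp, rfl⟩, ?_⟩
    refine le_trans (le_min ?_ hpz) (tri y₀ p.2 z)
    rw [hsymm]; exact hy₀ p hp
  · rintro ⟨γ, ⟨p, hp, rfl⟩, h⟩
    exact ⟨p, hp, le_trans (le_min (hy₀ p hp) h) (tri p.2 y₀ z)⟩

end Aux1

section Aux2

variable {Y Y' : Type*} {Γ : Type*} [LinearOrder Γ] [OrderTop Γ]

theorem transfer {u : Y → Y → Γ} {u' : Y' → Y' → Γ}
    (hu : IsUltrametric u) (hu' : IsUltrametric u')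
    (hY : SphericallyComplete u) {f : Y → Y'} (hsurj : Function.Surjective f)
    (H : ∀ a z', f a ≠ z' → ∃ b, u' (f a) z' < u' (f b) z' ∧ u a b = u' (f a) z' ∧
      ∀ c, u a b ≤ u a c → u' (f a) z' ≤ u' (f a) (f c)) :
    SphericallyComplete u' := by
  classical
  obtain ⟨htop, hmin, hsymm⟩ := hu
  obtain ⟨htop', hmin', hsymm'⟩ := hu'
  have triY : ∀ a m b, min (u a m) (u m b) ≤ u a b := fun a m b => hmin m a b
  have tri' : ∀ a m b, min (u' a m) (u' m b) ≤ u' a b := fun a m b => hmin' m a b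
  intro N hNne hNball hNchain
  by_contra hEmpty
  obtain ⟨S₁, hS₁⟩ := hNne
  obtain ⟨c₁, hc₁, -⟩ := ball_canonical ⟨htop', hmin', hsymm'⟩ (hNball S₁ hS₁)
  obtain ⟨a₁, ha₁⟩ := hsurj c₁
  -- canonical centers
  have hcan : ∀ S : Set Y', ∃ c, S ∈ N →
      (c ∈ S ∧ ∀ w z, z ∈ S → u' c z ≤ u' c w → w ∈ S) := by
    intro S
    by_cases h : S ∈ N
    · obtain ⟨c, hcmem, hcup⟩ := ball_canonical ⟨htop', hmin', hsymm'⟩ (hNball S h)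
      exact ⟨c, fun _ => ⟨hcmem, hcup⟩⟩
    · exact ⟨c₁, fun h' => absurd h' h⟩
  choose cc hcc using hcan
  have hccmem : ∀ S ∈ N, cc S ∈ S := fun S h => (hcc S h).1
  have hccup : ∀ S ∈ N, ∀ w z, z ∈ S → u' (cc S) z ≤ u' (cc S) w → w ∈ S :=
    fun S h => (hcc S h).2
  -- every point misses some ball
  have hmiss : ∀ y' : Y', ∃ S, S ∈ N ∧ y' ∉ S := by
    intro y'
    by_contra h
    push_neg at h
    exact hEmpty ⟨y', fun S hS => h S hS⟩
  choose Sf hSfN hSfnot using hmiss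
  -- distance constancy
  have L0 : ∀ (y' : Y') (S), S ∈ N → y' ∉ S → ∀ z ∈ S, u' y' z = u' y' (cc S) := by
    intro y' S hSN hy' z hz
    have hlt : ∀ w ∈ S, u' (cc S) y' < u' (cc S) w := by
      intro w hw
      by_contra hle
      push_neg at hle
      exact hy' (hccup S hSN y' w hw hle)
    have h1 : u' y' (cc S) ≤ u' y' z := by
      refine le_trans (le_min le_rfl ?_) (tri' y' (cc S) z)
      rw [hsymm' y' (cc S)]
      exact (hlt z hz).le
    refine le_antisymm ?_ h1
    by_contra hgt
    push_neg at hgt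
    have h2 : u' y' (cc S) < min (u' y' z) (u' z (cc S)) := by
      refine lt_min hgt ?_
      rw [hsymm' z (cc S)]
      rw [hsymm' y' (cc S)]
      exact hlt z hz
    exact absurd (lt_of_lt_of_le h2 (tri' y' z (cc S))) (lt_irrefl _)
  -- definitions
  set δ : Y → Γ := fun a => u' (f a) (cc (Sf (f a))) with hδdef
  set D : Y → Set (Set Y') := fun a => {S | S ∈ N ∧ f a ∈ S} with hDdef
  have hζex : ∀ a : Y, ∃ b, δ a < u' (f b) (cc (Sf (f a))) ∧ u a b = δ a ∧
      ∀ c, u a b ≤ u a c → δ a ≤ u' (f a) (f c) := by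
    intro a
    have hne : f a ≠ cc (Sf (f a)) := by
      intro h
      have hmem := hccmem (Sf (f a)) (hSfN (f a))
      rw [← h] at hmem
      exact hSfnot (f a) hmem
    exact H a (cc (Sf (f a))) hne
  choose ζ hζ1 hζ2 hζ3 using hζex
  have L1 : ∀ (a : Y) (S), S ∈ N → f a ∉ S → u' (f a) (cc S) = δ a := by
    intro a S hSN hnot
    rcases eq_or_ne S (Sf (f a)) with rfl | hne
    · rfl
    · rcases hNchain hSN (hSfN (f a)) hne with hsub | hsub
      · exact L0 (f a) (Sf (f a)) (hSfN (f a)) (hSfnot (f a)) (cc S) (hsub (hccmem S hSN))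
      · exact (L0 (f a) S hSN hnot (cc (Sf (f a))) (hsub (hccmem _ (hSfN _)))).symm
  have L2 : ∀ a t, δ a ≤ u' (f a) (f t) → ∀ S, S ∈ N → f a ∈ S → f t ∈ S := by
    intro a t hle S hSN haS
    have hS0N := hSfN (f a)
    have hnot0 := hSfnot (f a)
    have hsub : Sf (f a) ⊆ S := by
      rcases eq_or_ne S (Sf (f a)) with rfl | hne
      · exact absurd haS hnot0
      rcases hNchain hSN hS0N hne with h | h
      · exact absurd (h haS) hnot0
      · exact h
    have hccS0 : cc (Sf (f a)) ∈ S := hsub (hccmem _ hS0N)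
    rcases le_or_gt (u' (cc S) (f a)) (δ a) with hca | hca
    · exact hccup S hSN (f t) (f a) haS
        (le_trans (le_min le_rfl (hca.trans hle)) (tri' (cc S) (f a) (f t)))
    · apply hccup S hSN (f t) (cc (Sf (f a))) hccS0
      have h1 : u' (cc S) (cc (Sf (f a))) ≤ δ a := by
        by_contra hgt
        push_neg at hgt
        have h2 : δ a < min (u' (f a) (cc S)) (u' (cc S) (cc (Sf (f a)))) := by
          refine lt_min ?_ hgt
          rw [hsymm' (f a) (cc S)]
          exact hca
        exact absurd (lt_of_lt_of_le h2 (tri' (f a) (cc S) (cc (Sf (f a)))))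
          (lt_irrefl _)
      exact le_trans h1 (le_trans (le_min hca.le hle) (tri' (cc S) (f a) (f t)))
  have F1 : ∀ a c, δ a ≤ u a c → δ a ≤ u' (f a) (f c) := by
    intro a c h
    exact hζ3 a c (by rw [hζ2]; exact h)
  have F2 : ∀ a b, δ a ≤ u a b → D a ⊆ D b := by
    intro a b h S hS
    exact ⟨hS.1, L2 a b (F1 a b h) S hS.1 hS.2⟩
  have F3 : ∀ a b, δ a ≤ u a b → δ a ≤ δ b := by
    intro a b h
    have hDB := F2 a b h
    have hfanot : f a ∉ Sf (f b) := by
      intro hin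
      exact hSfnot (f b) (hDB ⟨hSfN (f b), hin⟩).2
    have h1 : u' (f a) (cc (Sf (f b))) = δ a := L1 a _ (hSfN (f b)) hfanot
    refine le_trans (le_min ?_ h1.ge) (tri' (f b) (f a) (cc (Sf (f b))))
    rw [hsymm' (f b) (f a)]
    exact F1 a b h
  have Step : ∀ a, D a ⊆ D (ζ a) ∧ (D a ≠ D (ζ a) ∨ δ a < δ (ζ a)) := by
    intro a
    have hub : δ a ≤ u a (ζ a) := le_of_eq (hζ2 a).symm
    refine ⟨F2 a (ζ a) hub, ?_⟩
    by_cases hDeq : D a = D (ζ a)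
    · right
      have hnot : f (ζ a) ∉ Sf (f a) := by
        intro hin
        have h1 : Sf (f a) ∈ D (ζ a) := ⟨hSfN (f a), hin⟩
        have h2 : Sf (f a) ∈ D a := hDeq ▸ h1
        exact hSfnot (f a) h2.2
      have := L1 (ζ a) (Sf (f a)) (hSfN (f a)) hnot
      calc δ a < u' (f (ζ a)) (cc (Sf (f a))) := hζ1 a
        _ = δ (ζ a) := this
    · exact Or.inl hDeq
  -- the relation
  let r : Y → Y → Prop := fun a b =>
    a = b ∨ (δ a ≤ u a b ∧ D a ⊆ D b ∧ (D a ≠ D b ∨ δ a < δ b))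
  have rstep : ∀ a, r a (ζ a) := fun a =>
    Or.inr ⟨le_of_eq (hζ2 a).symm, (Step a).1, (Step a).2⟩
  have rtrans : ∀ {a b c}, r a b → r b c → r a c := by
    intro a b c hab hbc
    rcases hab with rfl | ⟨h1, h2, h3⟩
    · exact hbc
    rcases hbc with rfl | ⟨g1, g2, g3⟩
    · exact Or.inr ⟨h1, h2, h3⟩
    · have hδab : δ a ≤ δ b := F3 a b h1
      refine Or.inr ⟨le_trans (le_min h1 (le_trans hδab g1)) (triY a b c),
        h2.trans g2, ?_⟩
      by_cases hDc : D a = D c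
      · have hDab : D a = D b := Set.Subset.antisymm h2 (by rw [hDc]; exact g2)
        have hDbc : D b = D c := by rw [← hDab, hDc]
        exact Or.inr (lt_trans (h3.resolve_left (fun h => h hDab))
          (g3.resolve_left (fun h => h hDbc)))
      · exact Or.inl hDc
  have hBsub : ∀ a b, δ a ≤ u a b → closedBall u (δ b) b ⊆ closedBall u (δ a) a := by
    intro a b h x hx
    have hx' : δ b ≤ u b x := hx
    show δ a ≤ u a x
    exact le_trans (le_min h (le_trans (F3 a b h) hx')) (triY a b x)
  have rchain : ∀ C : Set Y, IsChain r C → ∃ ub, ∀ a ∈ C, r a ub := by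
    intro C hC
    rcases C.eq_empty_or_nonempty with rfl | hne
    · exact ⟨a₁, by simp⟩
    have hBB : ((fun a => closedBall u (δ a) a) '' C).Nonempty := hne.image _
    have hBball : ∀ B ∈ (fun a => closedBall u (δ a) a) '' C, IsBall u B := by
      rintro _ ⟨a, _, rfl⟩
      refine ⟨{(δ a, a)}, ⟨(δ a, a), rfl⟩, ⟨a, ?_⟩, ?_⟩
      · rintro p hp
        rw [Set.mem_singleton_iff] at hp
        subst hp
        show δ a ≤ u a a
        rw [(htop a a).2 rfl]; exact le_top
      · simp
    have hBchain : IsChain (· ⊆ ·) ((fun a => closedBall u (δ a) a) '' C) := by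
      rintro _ ⟨a, ha, rfl⟩ _ ⟨b, hb, rfl⟩ hne'
      have hab : a ≠ b := fun h => hne' (h ▸ rfl)
      rcases hC ha hb hab with hr | hr
      · rcases hr with heq | ⟨h1, -, -⟩
        · exact absurd heq hab
        · exact Or.inr (hBsub a b h1)
      · rcases hr with heq | ⟨h1, -, -⟩
        · exact absurd heq.symm hab
        · exact Or.inl (hBsub b a h1)
    obtain ⟨t, ht⟩ := hY _ hBB hBball hBchain
    have htmem : ∀ a ∈ C, δ a ≤ u a t := by
      intro a ha
      exact ht _ ⟨a, ha, rfl⟩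
    by_cases hcase : ∀ a ∈ C, D a ≠ D t ∨ δ a < δ t
    · exact ⟨t, fun a ha => Or.inr ⟨htmem a ha, F2 a t (htmem a ha), hcase a ha⟩⟩
    · push_neg at hcase
      obtain ⟨a₀, ha₀C, hDeq, hδle⟩ := hcase
      have hamax : ∀ a ∈ C, r a a₀ := by
        intro a ha
        rcases eq_or_ne a a₀ with rfl | hne'
        · exact Or.inl rfl
        rcases hC ha ha₀C hne' with hr | hr
        · exact hr
        · rcases hr with heq | ⟨g1, g2, g3⟩
          · exact Or.inl heq.symm
          · exfalso
            have hDat : D a ⊆ D t := F2 a t (htmem a ha)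
            have hEq : D a₀ = D a := Set.Subset.antisymm g2 (by rw [hDeq]; exact hDat)
            have hlt : δ a₀ < δ a := g3.resolve_left (fun h => h hEq)
            have : δ a ≤ δ a₀ := le_trans (F3 a t (htmem a ha)) hδle
            exact absurd (lt_of_lt_of_le hlt this) (lt_irrefl _)
      exact ⟨ζ a₀, fun a ha => rtrans (hamax a ha) (rstep a₀)⟩
  obtain ⟨m, hm⟩ := exists_maximal_of_chains_bounded rchain (fun {a b c} => rtrans)
  have h2 := hm (ζ m) (rstep m)
  rcases eq_or_ne (ζ m) m with heq | hne
  · rcases (Step m).2 with h | h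
    · exact h (by rw [heq])
    · rw [heq] at h
      exact absurd h (lt_irrefl _)
  · rcases h2 with heq2 | ⟨g1, g2, g3⟩
    · exact hne heq2
    · have hEq : D m = D (ζ m) := Set.Subset.antisymm (Step m).1 g2
      have hlt1 : δ m < δ (ζ m) := ((Step m).2).resolve_left (fun h => h hEq)
      have hlt2 : δ (ζ m) < δ m := g3.resolve_left (fun h => h hEq.symm)
      exact absurd (lt_trans hlt1 hlt2) (lt_irrefl _)

end Aux2

section Aux3

variable {Γ : Type*} [LinearOrder Γ] [OrderTop Γ]

theorem isUltrametric_prod {ι : Type*} [Fintype ι] {X : ι → Type*}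
    (u : ∀ i, X i → X i → Γ) (hu : ∀ i, IsUltrametric (u i)) :
    IsUltrametric (fun a b : ∀ i, X i => Finset.univ.inf fun i => u i (a i) (b i)) := by
  refine ⟨?_, ?_, ?_⟩
  · intro a b
    rw [Finset.inf_eq_top_iff]
    constructor
    · intro h
      funext i
      exact ((hu i).1 _ _).1 (h i (Finset.mem_univ i))
    · intro h i _
      exact ((hu i).1 _ _).2 (congrFun h i)
  · intro x y z
    apply Finset.le_inf
    intro i _
    refine le_trans (min_le_min ?_ ?_) ((hu i).2.1 (x i) (y i) (z i))
    · exact Finset.inf_le (Finset.mem_univ i)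
    · exact Finset.inf_le (Finset.mem_univ i)
  · intro a b
    exact Finset.inf_congr rfl (fun i _ => (hu i).2.2 (a i) (b i))

theorem prod_sphericallyComplete {ι : Type*} [Fintype ι] {X : ι → Type*}
    (u : ∀ i, X i → X i → Γ) (hu : ∀ i, IsUltrametric (u i))
    (hsc : ∀ i, SphericallyComplete (u i)) :
    SphericallyComplete (fun a b : ∀ i, X i => Finset.univ.inf fun i => u i (a i) (b i)) := by
  classical
  have hUU := isUltrametric_prod u hu
  intro N hNne hNball hNchain
  obtain ⟨B₁, hB₁⟩ := hNne
  obtain ⟨z₁, hz₁, -, -⟩ := ball_upSet_form hUU (hNball B₁ hB₁)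
  have hforms : ∀ B : Set (∀ i, X i), ∃ (p : (∀ i, X i) × Set Γ), B ∈ N →
      p.1 ∈ B ∧ p.2.Nonempty ∧
        B = {z | ∃ γ ∈ p.2, γ ≤ Finset.univ.inf fun i => u i (p.1 i) (z i)} := by
    intro B
    by_cases h : B ∈ N
    · obtain ⟨y₀, hy₀, G, hGne, hBeq⟩ := ball_upSet_form hUU (hNball B h)
      exact ⟨(y₀, G), fun _ => ⟨hy₀, hGne, hBeq⟩⟩
    · exact ⟨(z₁, Set.univ), fun h' => absurd h' h⟩
  choose pB hpB using hforms
  set y₀ : Set (∀ i, X i) → (∀ i, X i) := fun B => (pB B).1 with hy₀def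
  set G : Set (∀ i, X i) → Set Γ := fun B => (pB B).2 with hGdef
  have hmemB : ∀ B ∈ N, y₀ B ∈ B := fun B h => (hpB B h).1
  have hGne : ∀ B ∈ N, (G B).Nonempty := fun B h => (hpB B h).2.1
  have hBeq : ∀ B ∈ N, B = {z | ∃ γ ∈ G B, γ ≤ Finset.univ.inf fun i => u i (y₀ B i) (z i)} :=
    fun B h => (hpB B h).2.2
  have hmemiff : ∀ B ∈ N, ∀ z, (z ∈ B ↔
      ∃ γ ∈ G B, γ ≤ Finset.univ.inf fun i => u i (y₀ B i) (z i)) := by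
    intro B hB z
    conv_lhs => rw [hBeq B hB]
    exact Iff.rfl
  -- projection monotonicity
  have hproj : ∀ (i : ι) (B B' : Set (∀ i, X i)), B ∈ N → B' ∈ N → B ⊆ B' →
      {x | ∃ γ ∈ G B, γ ≤ u i (y₀ B i) x} ⊆ {x | ∃ γ ∈ G B', γ ≤ u i (y₀ B' i) x} := by
    intro i B B' hB hB' hsub x hx
    obtain ⟨γ, hγ, hle⟩ := hx
    have hz : Function.update (y₀ B) i x ∈ B := by
      rw [hmemiff B hB]
      refine ⟨γ, hγ, Finset.le_inf fun j _ => ?_⟩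
      rcases eq_or_ne j i with rfl | hne
      · rw [Function.update_self]
        exact hle
      · rw [Function.update_of_ne hne]
        rw [((hu j).1 _ _).2 rfl]
        exact le_top
    have hz' := hsub hz
    rw [hmemiff B' hB'] at hz'
    obtain ⟨γ', hγ', hle'⟩ := hz'
    refine ⟨γ', hγ', le_trans (le_trans hle' (Finset.inf_le (Finset.mem_univ i))) ?_⟩
    rw [Function.update_self]
  have key : ∀ i : ι, ∃ t : X i, ∀ B ∈ N, ∃ γ ∈ G B, γ ≤ u i (y₀ B i) t := by
    intro i
    have hres := hsc i ((fun B => {x | ∃ γ ∈ G B, γ ≤ u i (y₀ B i) x}) '' N)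
      (⟨_, ⟨B₁, hB₁, rfl⟩⟩) ?_ ?_
    · obtain ⟨t, ht⟩ := hres
      refine ⟨t, fun B hB => ht _ ⟨B, hB, rfl⟩⟩
    · rintro _ ⟨B, hB, rfl⟩
      exact isBall_upSet (hu i) (y₀ B i) (hGne B hB)
    · rintro _ ⟨B, hB, rfl⟩ _ ⟨B', hB', rfl⟩ hne
      have hBB' : B ≠ B' := fun h => hne (h ▸ rfl)
      rcases hNchain hB hB' hBB' with h | h
      · exact Or.inl (hproj i B B' hB hB' h)
      · exact Or.inr (hproj i B' B hB' hB h)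
  choose t ht using key
  refine ⟨t, ?_⟩
  intro B hB
  rw [hmemiff B hB]
  rcases isEmpty_or_nonempty ι with hι | hι
  · obtain ⟨γ, hγ⟩ := hGne B hB
    refine ⟨γ, hγ, ?_⟩
    rw [Finset.univ_eq_empty, Finset.inf_empty]
    exact le_top
  · choose γs hγs1 hγs2 using fun i => ht i B hB
    obtain ⟨i₀, -, hmin⟩ := Finset.exists_min_image Finset.univ γs
      ⟨Classical.arbitrary ι, Finset.mem_univ _⟩
    exact ⟨γs i₀, hγs1 i₀,
      Finset.le_inf fun j _ => le_trans (hmin j (Finset.mem_univ j)) (hγs2 j)⟩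

end Aux3


section Stmt19

variable {A : Type*} [AddCommGroup A] {Γ : Type*} [LinearOrder Γ] [OrderTop Γ]

/-- The sum `A₁ + … + A_n` of subgroups, as a set. -/
def sumSet {n : ℕ} (Asub : Fin n → AddSubgroup A) : Set A :=
  {x | ∃ a : Fin n → A, (∀ i, a i ∈ Asub i) ∧ x = ∑ i, a i}

/-- The sum `A₁ + … + A_n` is pseudo-direct. -/
def PseudoDirect {n : ℕ} (v : A → Γ) (Asub : Fin n → AddSubgroup A) : Prop :=
  ∀ x ∈ sumSet Asub, x ≠ 0 → ∃ a : Fin n → A, (∀ i, a i ∈ Asub i) ∧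
    v (∑ i, a i) = (Finset.univ.inf fun i => v (a i)) ∧ v x < v (x - ∑ i, a i)

/-- The addition homomorphism `A₁ × … × A_n → A₁ + … + A_n` (product with the
minimum valuation) is immediate, expressed via (IH1) and (IH2). -/
def ImmediateSum {n : ℕ} (v : A → Γ) (Asub : Fin n → AddSubgroup A) : Prop :=
  ∀ x ∈ sumSet Asub, x ≠ 0 → ∃ a : (∀ i, Asub i),
    v x < v (x - ∑ i, (a i : A)) ∧
    ∀ b : (∀ i, Asub i),
      (Finset.univ.inf fun i => v (a i : A)) ≤ (Finset.univ.inf fun i => v (b i : A)) →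
        v (∑ i, (a i : A)) ≤ v (∑ i, (b i : A))

section Aux4

variable {v : A → Γ}

theorem v_zero (hv0 : ∀ a : A, v a = ⊤ ↔ a = 0) : v 0 = ⊤ := (hv0 0).2 rfl

theorem v_neg (hv0 : ∀ a : A, v a = ⊤ ↔ a = 0)
    (hv2 : ∀ a b : A, min (v a) (v b) ≤ v (a - b)) : ∀ a : A, v (-a) = v a := by
  have h : ∀ a : A, v a ≤ v (-a) := by
    intro a
    have := hv2 0 a
    rw [zero_sub, v_zero hv0] at this
    simpa using this
  intro a
  refine le_antisymm ?_ (h a)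
  have := h (-a)
  rwa [neg_neg] at this

theorem v_add (hv0 : ∀ a : A, v a = ⊤ ↔ a = 0)
    (hv2 : ∀ a b : A, min (v a) (v b) ≤ v (a - b)) (a b : A) :
    min (v a) (v b) ≤ v (a + b) := by
  have := hv2 a (-b)
  rwa [sub_neg_eq_add, v_neg hv0 hv2] at this

theorem v_sum (hv0 : ∀ a : A, v a = ⊤ ↔ a = 0)
    (hv2 : ∀ a b : A, min (v a) (v b) ≤ v (a - b)) {ι : Type*} (s : Finset ι) (g : ι → A) :
    (s.inf fun i => v (g i)) ≤ v (∑ i ∈ s, g i) := by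
  classical
  induction s using Finset.induction with
  | empty => simp [v_zero hv0]
  | insert _ _ h ih =>
    rw [Finset.sum_insert h, Finset.inf_insert]
    exact le_trans (min_le_min le_rfl ih) (v_add hv0 hv2 _ _)

theorem v_eq_of_lt (hv0 : ∀ a : A, v a = ⊤ ↔ a = 0)
    (hv2 : ∀ a b : A, min (v a) (v b) ≤ v (a - b)) {x y : A}
    (h : v x < v (x - y)) : v y = v x := by
  have h1 : v x ≤ v y := by
    have h2 := hv2 x (x - y)
    rw [sub_sub_cancel] at h2
    exact le_trans (le_min le_rfl h.le) h2
  refine le_antisymm ?_ h1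
  by_contra hgt
  push_neg at hgt
  have h3 := v_add hv0 hv2 (x - y) y
  rw [sub_add_cancel] at h3
  exact absurd (lt_of_lt_of_le (lt_min h hgt) h3) (lt_irrefl _)

theorem v_sub_comm (hv0 : ∀ a : A, v a = ⊤ ↔ a = 0)
    (hv2 : ∀ a b : A, min (v a) (v b) ≤ v (a - b)) (a b : A) : v (a - b) = v (b - a) := by
  rw [← v_neg hv0 hv2 (a - b), neg_sub]

theorem v_tri (hv0 : ∀ a : A, v a = ⊤ ↔ a = 0)
    (hv2 : ∀ a b : A, min (v a) (v b) ≤ v (a - b)) (a b c : A) :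
    min (v (a - b)) (v (b - c)) ≤ v (a - c) := by
  have := hv2 (a - b) (c - b)
  rw [sub_sub_sub_cancel_right, v_sub_comm hv0 hv2 c b] at this
  exact this

theorem sumSet_zero {n : ℕ} (Asub : Fin n → AddSubgroup A) : (0 : A) ∈ sumSet Asub :=
  ⟨fun _ => 0, fun i => (Asub i).zero_mem, by simp⟩

theorem sumSet_sub {n : ℕ} {Asub : Fin n → AddSubgroup A} {x y : A}
    (hx : x ∈ sumSet Asub) (hy : y ∈ sumSet Asub) : x - y ∈ sumSet Asub := by
  obtain ⟨a, ha, rfl⟩ := hx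
  obtain ⟨b, hb, rfl⟩ := hy
  exact ⟨fun i => a i - b i, fun i => sub_mem (ha i) (hb i), by rw [Finset.sum_sub_distrib]⟩

theorem isUltrametric_val (hv0 : ∀ a : A, v a = ⊤ ↔ a = 0)
    (hv2 : ∀ a b : A, min (v a) (v b) ≤ v (a - b)) {S : Type*} (g : S → A)
    (hg : Function.Injective g) : IsUltrametric (fun x y : S => v (g x - g y)) := by
  refine ⟨?_, ?_, ?_⟩
  · intro y z
    rw [hv0, sub_eq_zero]
    exact ⟨fun h => hg h, fun h => congrArg g h⟩
  · intro x y z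
    exact v_tri hv0 hv2 (g y) (g x) (g z)
  · intro y z
    exact v_sub_comm hv0 hv2 (g y) (g z)

theorem pd_to_imm (hv0 : ∀ a : A, v a = ⊤ ↔ a = 0)
    (hv2 : ∀ a b : A, min (v a) (v b) ≤ v (a - b)) {n : ℕ} {Asub : Fin n → AddSubgroup A}
    (hPD : PseudoDirect v Asub) : ImmediateSum v Asub := by
  intro x hx hx0
  obtain ⟨a, ha, hinf, hlt⟩ := hPD x hx hx0
  refine ⟨fun i => ⟨a i, ha i⟩, hlt, ?_⟩
  intro b hb
  calc v (∑ i, a i) = Finset.univ.inf fun i => v (a i) := hinf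
    _ ≤ Finset.univ.inf fun i => v (b i : A) := hb
    _ ≤ v (∑ i, (b i : A)) := v_sum hv0 hv2 _ _

theorem imm_to_pd (hv0 : ∀ a : A, v a = ⊤ ↔ a = 0)
    (hv2 : ∀ a b : A, min (v a) (v b) ≤ v (a - b)) {n : ℕ} {Asub : Fin n → AddSubgroup A}
    (hIm : ImmediateSum v Asub) : PseudoDirect v Asub := by
  classical
  intro x hx hx0
  obtain ⟨a, hlt, hopt⟩ := hIm x hx hx0
  have hne : Nonempty (Fin n) := by
    rcases Nat.eq_zero_or_pos n with rfl | h
    · obtain ⟨c, -, rfl⟩ := hx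
      exact absurd (by simp) hx0
    · exact ⟨⟨0, h⟩⟩
  haveI := hne
  obtain ⟨j, -, hj⟩ := Finset.exists_mem_eq_inf Finset.univ Finset.univ_nonempty
    (fun i => v (a i : A))
  set b : ∀ i, Asub i := Function.update (0 : ∀ i, Asub i) j (a j) with hbdef
  have hbj : b j = a j := Function.update_self _ _ _
  have hbo : ∀ i, i ≠ j → b i = 0 := fun i h => Function.update_of_ne h _ _
  have hsumb : ∑ i, (b i : A) = (a j : A) := by
    rw [Fintype.sum_eq_single j (fun i hi => by rw [hbo i hi]; simp)]
    rw [hbj]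
  have hinfb : (Finset.univ.inf fun i => v (b i : A)) = v (a j : A) := by
    apply le_antisymm
    · exact le_of_le_of_eq (Finset.inf_le (Finset.mem_univ j)) (by rw [hbj])
    · apply Finset.le_inf
      intro i _
      rcases eq_or_ne i j with rfl | h
      · rw [hbj]
      · rw [hbo i h]
        simp [v_zero hv0]
  have h1 : v (∑ i, (a i : A)) ≤ Finset.univ.inf fun i => v (a i : A) := by
    have h2 := hopt b (by rw [hinfb, ← hj])
    rw [hsumb] at h2
    exact le_of_le_of_eq h2 hj.symm
  exact ⟨fun i => (a i : A), fun i => (a i).2,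
    le_antisymm h1 (v_sum hv0 hv2 _ _), hlt⟩

end Aux4

section Aux5

variable {v : A → Γ}

theorem sum_sphericallyComplete (hv0 : ∀ a : A, v a = ⊤ ↔ a = 0)
    (hv2 : ∀ a b : A, min (v a) (v b) ≤ v (a - b)) {n : ℕ} (Asub : Fin n → AddSubgroup A)
    (hsc : ∀ i, SphericallyComplete (fun x y : Asub i => v ((x : A) - (y : A))))
    (hPD : PseudoDirect v Asub) :
    SphericallyComplete (fun x y : sumSet Asub => v ((x : A) - (y : A))) := by
  classical
  have hmemf : ∀ a : ∀ i, Asub i, (∑ i, (a i : A)) ∈ sumSet Asub :=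
    fun a => ⟨fun i => (a i : A), fun i => (a i).2, rfl⟩
  set f : (∀ i, Asub i) → sumSet Asub := fun a => ⟨∑ i, (a i : A), hmemf a⟩ with hfdef
  have hu : IsUltrametric (fun a b : ∀ i, Asub i =>
      Finset.univ.inf fun i => v ((a i : A) - (b i : A))) :=
    isUltrametric_prod (fun i => fun x y : Asub i => v ((x : A) - (y : A)))
      (fun i => isUltrametric_val hv0 hv2 _ Subtype.val_injective)
  have hu' : IsUltrametric (fun x y : sumSet Asub => v ((x : A) - (y : A))) :=
    isUltrametric_val hv0 hv2 (fun x : sumSet Asub => (x : A)) Subtype.val_injective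
  have hY : SphericallyComplete (fun a b : ∀ i, Asub i =>
      Finset.univ.inf fun i => v ((a i : A) - (b i : A))) :=
    prod_sphericallyComplete (fun i => fun x y : Asub i => v ((x : A) - (y : A)))
      (fun i => isUltrametric_val hv0 hv2 _ Subtype.val_injective) hsc
  have hsurj : Function.Surjective f := by
    rintro ⟨x, hx⟩
    obtain ⟨c, hc, hxe⟩ := hx
    refine ⟨fun i => ⟨c i, hc i⟩, Subtype.ext ?_⟩
    exact hxe.symm
  refine transfer hu hu' hY hsurj ?_
  intro a z' hne
  have hx : ((z' : A) - ∑ i, (a i : A)) ∈ sumSet Asub := sumSet_sub z'.2 (hmemf a)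
  have hx0 : (z' : A) - ∑ i, (a i : A) ≠ 0 :=
    sub_ne_zero.mpr (fun h => hne (Subtype.ext h.symm))
  obtain ⟨d, hd, hdinf, hdlt⟩ := hPD _ hx hx0
  set x : A := (z' : A) - ∑ i, (a i : A) with hxdef
  have hvd : v (∑ i, d i) = v x := v_eq_of_lt hv0 hv2 hdlt
  have hfa : v ((f a : A) - (z' : A)) = v x := by
    show v ((∑ i, (a i : A)) - (z' : A)) = v x
    rw [v_sub_comm hv0 hv2]
  refine ⟨fun i => a i + ⟨d i, hd i⟩, ?_, ?_, ?_⟩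
  · -- strict increase
    have hsum : (f (fun i => a i + ⟨d i, hd i⟩) : A) = (∑ i, (a i : A)) + ∑ i, d i := by
      show (∑ i, ((a i : A) + d i)) = _
      rw [Finset.sum_add_distrib]
    have h1 : v ((f (fun i => a i + ⟨d i, hd i⟩) : A) - (z' : A)) = v (x - ∑ i, d i) := by
      rw [hsum, v_sub_comm hv0 hv2]
      congr 1
      rw [hxdef]
      abel
    rw [hfa, h1]
    exact hdlt
  · -- radius equality
    have h1 : (Finset.univ.inf fun i => v ((a i : A) - ((a i + ⟨d i, hd i⟩ : Asub i) : A)))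
        = Finset.univ.inf fun i => v (d i) := by
      apply Finset.inf_congr rfl
      intro i _
      show v ((a i : A) - ((a i : A) + d i)) = v (d i)
      rw [sub_add_cancel_left, v_neg hv0 hv2]
    show (Finset.univ.inf fun i => v ((a i : A) - _)) = v ((f a : A) - (z' : A))
    rw [h1, hfa, ← hdinf, hvd]
  · -- ball control
    intro c hc
    rw [hfa]
    have h2 : v ((f a : A) - (f c : A)) = v (∑ i, ((a i : A) - (c i : A))) := by
      show v ((∑ i, (a i : A)) - ∑ i, (c i : A)) = _
      rw [Finset.sum_sub_distrib]
    show v x ≤ v ((f a : A) - (f c : A))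
    rw [h2]
    refine le_trans ?_ (v_sum hv0 hv2 _ _)
    refine le_trans ?_ hc
    have h1 : (Finset.univ.inf fun i => v ((a i : A) - ((a i + ⟨d i, hd i⟩ : Asub i) : A)))
        = Finset.univ.inf fun i => v (d i) := by
      apply Finset.inf_congr rfl
      intro i _
      show v ((a i : A) - ((a i : A) + d i)) = v (d i)
      rw [sub_add_cancel_left, v_neg hv0 hv2]
    rw [h1, ← hdinf, hvd]

theorem sum_oap (hv0 : ∀ a : A, v a = ⊤ ↔ a = 0)
    (hv2 : ∀ a b : A, min (v a) (v b) ≤ v (a - b)) {n : ℕ} (Asub : Fin n → AddSubgroup A)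
    (hSC : SphericallyComplete (fun x y : sumSet Asub => v ((x : A) - (y : A))))
    (z' : A) : ∃ x ∈ sumSet Asub, ∀ y ∈ sumSet Asub, v (z' - y) ≤ v (z' - x) := by
  classical
  set V : Set Γ := {γ | ∃ y : sumSet Asub, v (z' - (y : A)) = γ} with hVdef
  have hVne : V.Nonempty := ⟨v (z' - ((⟨0, sumSet_zero Asub⟩ : sumSet Asub) : A)),
    ⟨⟨0, sumSet_zero Asub⟩, rfl⟩⟩
  set N : Set (Set (sumSet Asub)) :=
    (fun γ => {z : sumSet Asub | γ ≤ v (z' - (z : A))}) '' V with hNdef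
  have hball : ∀ B ∈ N, IsBall (fun x y : sumSet Asub => v ((x : A) - (y : A))) B := by
    rintro _ ⟨γ, ⟨y₀, rfl⟩, rfl⟩
    refine ⟨{(v (z' - (y₀ : A)), y₀)}, ⟨_, rfl⟩, ⟨y₀, ?_⟩, ?_⟩
    · rintro p hp
      rw [Set.mem_singleton_iff] at hp
      subst hp
      show v (z' - (y₀ : A)) ≤ v ((y₀ : A) - (y₀ : A))
      rw [sub_self, v_zero hv0]
      exact le_top
    · ext z
      simp only [Set.mem_setOf_eq, Set.mem_iUnion, Set.mem_singleton_iff]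
      constructor
      · intro h
        refine ⟨_, rfl, ?_⟩
        show v (z' - (y₀ : A)) ≤ v ((y₀ : A) - (z : A))
        refine le_trans (le_min ?_ h) (v_tri hv0 hv2 (y₀ : A) z' (z : A))
        rw [v_sub_comm hv0 hv2]
      · rintro ⟨p, rfl, h⟩
        have h' : v (z' - (y₀ : A)) ≤ v ((y₀ : A) - (z : A)) := h
        exact le_trans (le_min le_rfl h') (v_tri hv0 hv2 z' (y₀ : A) (z : A))
  have hchain : IsChain (· ⊆ ·) N := by
    rintro _ ⟨γ, hγ, rfl⟩ _ ⟨γ', hγ', rfl⟩ hne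
    rcases le_total γ γ' with h | h
    · exact Or.inr (fun z hz => le_trans h hz)
    · exact Or.inl (fun z hz => le_trans h hz)
  obtain ⟨x, hx⟩ := hSC N (hVne.image _) hball hchain
  refine ⟨(x : A), x.2, ?_⟩
  intro y hy
  exact hx _ ⟨v (z' - ((⟨y, hy⟩ : sumSet Asub) : A)), ⟨⟨y, hy⟩, rfl⟩, rfl⟩

end Aux5


/-- a pseudo-direct sum of spherically complete subgroups of a valued
abelian group is spherically complete and has the optimal approximation property;
moreover the sum is pseudo-direct iff the addition homomorphism is immediate. -/
theorem pseudoDirect_sum_sphericallyComplete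
    (v : A → Γ)
    (hv0 : ∀ a : A, v a = ⊤ ↔ a = 0)
    (hv2 : ∀ a b : A, min (v a) (v b) ≤ v (a - b))
    {n : ℕ} (Asub : Fin n → AddSubgroup A)
    (hsc : ∀ i, SphericallyComplete (fun x y : Asub i => v ((x : A) - (y : A)))) :
    (PseudoDirect v Asub →
      SphericallyComplete (fun x y : sumSet Asub => v ((x : A) - (y : A))) ∧
      ∀ z' : A, ∃ x ∈ sumSet Asub, ∀ y ∈ sumSet Asub, v (z' - y) ≤ v (z' - x)) ∧
    (PseudoDirect v Asub ↔ ImmediateSum v Asub) := by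
  constructor
  · intro hPD
    have hSC := sum_sphericallyComplete hv0 hv2 Asub hsc hPD
    exact ⟨hSC, fun z' => sum_oap hv0 hv2 Asub hSC z'⟩
  · exact ⟨pd_to_imm hv0 hv2, imm_to_pd hv0 hv2⟩

end Stmt19
end
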